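/- Suppose the discount function satisfies δ(i)δ(j) ≤ δ(i+j) for all i,j ∈ ℕ. Then for any two equilibria S, T ∈ ℰ, the set (S∩T)_∞ := ∩_{n=1}^∞ Θⁿ(S∩T) is an equilibrium and satisfies V(x, (S∩T)_∞) ≥ max(V(x,S), V(x,T)) for all x ∈ 𝕏. -/

import Mathlib

open MeasureTheory ProbabilityTheory Set Filter Topology
open scoped ENNReal ENat

set_option linter.unusedSectionVars false
set_option maxHeartbeats 1000000
noncomputable section

/-- The σ-algebra generated by the first `n+1` coordinates of the path space:
the natural filtration of the coordinate process at time `n`. -/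
def pathSigma (𝕏 : Type*) [m : MeasurableSpace 𝕏] (n : ℕ) : MeasurableSpace (ℕ → 𝕏) :=
  ⨆ i ∈ Finset.range (n + 1), MeasurableSpace.comap (fun ω : ℕ → 𝕏 => ω i) m

/-- `Pr` is the family of laws of the time-homogeneous Markov chain with one-step
transition kernel `Q`: under `Pr x` the chain starts at `x`, and the Markov property
`Pr^x(X_{n+1} ∈ A | 𝓕_n) = Q(X_n, A)` holds. -/
structure IsMarkovChainLaw {𝕏 : Type*} [MeasurableSpace 𝕏]
    (Pr : Kernel 𝕏 (ℕ → 𝕏)) (Q : Kernel 𝕏 𝕏) : Prop where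
  start : ∀ x : 𝕏, Pr x {ω | ω 0 = x} = 1
  markov : ∀ (x : 𝕏) (n : ℕ) (B : Set (ℕ → 𝕏)), MeasurableSet[pathSigma 𝕏 n] B →
    ∀ A : Set 𝕏, MeasurableSet A →
      Pr x (B ∩ {ω | ω (n + 1) ∈ A}) = ∫⁻ ω in B, Q (ω n) A ∂(Pr x)

/-- The first hitting time `ρ(x,S) = inf {t ≥ 1 : X_t ∈ S}` along the path `ω`
(equal to `⊤` if `S` is never reached at a time `≥ 1`). -/
def hitTime {𝕏 : Type*} (S : Set 𝕏) (ω : ℕ → 𝕏) : ℕ∞ :=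
  sInf {n : ℕ∞ | ∃ t : ℕ, n = (t : ℕ∞) ∧ 1 ≤ t ∧ ω t ∈ S}

/-- The discounted payoff `δ(ρ(x,S)) f(X_{ρ(x,S)})` collected along the path `ω`,
with the convention that it vanishes when `S` is never hit. -/
def stopPayoff {𝕏 : Type*} (δ : ℕ → ℝ) (f : 𝕏 → ℝ) (S : Set 𝕏) (ω : ℕ → 𝕏) : ℝ :=
  if hitTime S ω = ⊤ then 0
  else δ (hitTime S ω).toNat * f (ω (hitTime S ω).toNat)

/-- The objective value `J(x, ρ(x,S)) = 𝔼^x[δ(ρ(x,S)) f(X_{ρ(x,S)})]`. -/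
def valJ {𝕏 : Type*} [MeasurableSpace 𝕏] (Pr : Kernel 𝕏 (ℕ → 𝕏)) (δ : ℕ → ℝ) (f : 𝕏 → ℝ)
    (S : Set 𝕏) (x : 𝕏) : ℝ :=
  ∫ ω, stopPayoff δ f S ω ∂(Pr x)

/-- The operator `Θ(S) = {x ∈ 𝕏 : f(x) ≥ J(x, ρ(x,S))}`. -/
def Θ {𝕏 : Type*} [MeasurableSpace 𝕏] (Pr : Kernel 𝕏 (ℕ → 𝕏)) (δ : ℕ → ℝ) (f : 𝕏 → ℝ)
    (S : Set 𝕏) : Set 𝕏 :=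
  {x | valJ Pr δ f S x ≤ f x}

/-- A Borel set `S ⊆ 𝕏` is an equilibrium if `Θ(S) = S`. -/
def IsEquilibrium {𝕏 : Type*} [MeasurableSpace 𝕏] (Pr : Kernel 𝕏 (ℕ → 𝕏)) (δ : ℕ → ℝ)
    (f : 𝕏 → ℝ) (S : Set 𝕏) : Prop :=
  MeasurableSet S ∧ Θ Pr δ f S = S

/-- The value `V(x,S) = max (f x) (J(x, ρ(x,S)))` associated with an equilibrium `S`. -/
def valV {𝕏 : Type*} [MeasurableSpace 𝕏] (Pr : Kernel 𝕏 (ℕ → 𝕏)) (δ : ℕ → ℝ) (f : 𝕏 → ℝ)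
    (S : Set 𝕏) (x : 𝕏) : ℝ :=
  max (f x) (valJ Pr δ f S x)

namespace TIE
attribute [local instance] Classical.propDecidable
variable {𝕏 : Type*}

def shift (n : ℕ) (ω : ℕ → 𝕏) : ℕ → 𝕏 := fun t => ω (n + t)

@[simp] lemma shift_apply (n : ℕ) (ω : ℕ → 𝕏) (t : ℕ) : shift n ω t = ω (n + t) := rfl


section hit
variable {S : Set 𝕏} {ω : ℕ → 𝕏}

lemma hitTime_le {t : ℕ} (ht : 1 ≤ t) (hmem : ω t ∈ S) : hitTime S ω ≤ (t : ℕ∞) :=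
  sInf_le ⟨t, rfl, ht, hmem⟩

lemma hitTime_eq_top : hitTime S ω = ⊤ ↔ ∀ t : ℕ, 1 ≤ t → ω t ∉ S := by
  constructor
  · intro h t ht hmem
    have := hitTime_le ht hmem
    rw [h] at this
    exact absurd (top_le_iff.1 this) (by simp)
  · intro h
    rw [hitTime, sInf_eq_top]
    rintro a ⟨t, rfl, ht, hmem⟩
    exact absurd hmem (h t ht)

lemma hitTime_pos : 1 ≤ hitTime S ω := by
  rw [hitTime]
  refine le_sInf ?_
  rintro a ⟨t, rfl, ht, -⟩
  exact_mod_cast Nat.one_le_cast.2 ht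

lemma hitTime_spec {t : ℕ} (h : hitTime S ω = (t : ℕ∞)) :
    1 ≤ t ∧ ω t ∈ S ∧ ∀ s : ℕ, 1 ≤ s → s < t → ω s ∉ S := by
  by_cases hne : ∃ s : ℕ, 1 ≤ s ∧ ω s ∈ S
  · classical
    set u := Nat.find hne with hu
    obtain ⟨hu1, humem⟩ := Nat.find_spec hne
    have hle : hitTime S ω ≤ (u : ℕ∞) := hitTime_le hu1 humem
    have hge : (u : ℕ∞) ≤ hitTime S ω := by
      refine le_sInf ?_
      rintro a ⟨s, rfl, hs1, hsmem⟩
      exact_mod_cast Nat.find_min' hne ⟨hs1, hsmem⟩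
    have : hitTime S ω = (u : ℕ∞) := le_antisymm hle hge
    rw [this] at h
    have htu : t = u := by exact_mod_cast h.symm
    subst htu
    exact ⟨hu1, humem, fun s hs1 hst hsm => Nat.find_min hne hst ⟨hs1, hsm⟩⟩
  · exfalso
    push_neg at hne
    have : hitTime S ω = ⊤ := hitTime_eq_top.2 hne
    rw [this] at h; simp at h

lemma mem_of_hitTime_eq {t : ℕ} (h : hitTime S ω = (t : ℕ∞)) : ω t ∈ S := (hitTime_spec h).2.1

lemma hitTime_ne_zero : hitTime S ω ≠ 0 := by
  intro h
  have := hitTime_pos (S := S) (ω := ω)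
  rw [h] at this; simp at this

lemma hitTime_anti {S' : Set 𝕏} (hss : S ⊆ S') : hitTime S' ω ≤ hitTime S ω := by
  refine le_sInf ?_
  rintro a ⟨t, rfl, ht, hmem⟩
  exact hitTime_le ht (hss hmem)

/-- characterization by first-hit data -/
lemma hitTime_eq_coe {t : ℕ} (ht : 1 ≤ t) (hmem : ω t ∈ S)
    (hmin : ∀ s : ℕ, 1 ≤ s → s < t → ω s ∉ S) : hitTime S ω = (t : ℕ∞) := by
  refine le_antisymm (hitTime_le ht hmem) (le_sInf ?_)
  rintro a ⟨s, rfl, hs1, hsmem⟩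
  by_contra hlt
  push_neg at hlt
  have hst : s < t := by exact_mod_cast hlt
  exact hmin s hs1 hst hsmem

end hit

section sigma
variable [m𝕏 : MeasurableSpace 𝕏]

lemma pathSigma_le_pi (n : ℕ) : pathSigma 𝕏 n ≤ MeasurableSpace.pi := by
  refine iSup₂_le fun i _ => ?_
  exact le_iSup (fun i => MeasurableSpace.comap (fun ω : ℕ → 𝕏 => ω i) m𝕏) i

lemma pathSigma_mono {n m : ℕ} (h : n ≤ m) : pathSigma 𝕏 n ≤ pathSigma 𝕏 m := by
  refine iSup₂_le fun i hi => ?_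
  have : i ∈ Finset.range (m + 1) := Finset.mem_range.2 (lt_of_lt_of_le (Finset.mem_range.1 hi) (by omega))
  exact le_iSup₂ (f := fun i (_ : i ∈ Finset.range (m+1)) => MeasurableSpace.comap (fun ω : ℕ → 𝕏 => ω i) m𝕏) i this

lemma measurable_coord_pathSigma {i n : ℕ} (h : i ≤ n) :
    Measurable[pathSigma 𝕏 n] (fun ω : ℕ → 𝕏 => ω i) := by
  rw [measurable_iff_comap_le]
  exact le_iSup₂ (f := fun i (_ : i ∈ Finset.range (n+1)) => MeasurableSpace.comap (fun ω : ℕ → 𝕏 => ω i) m𝕏) i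
    (Finset.mem_range.2 (by omega))

lemma measurableSet_coord {i n : ℕ} (h : i ≤ n) {A : Set 𝕏} (hA : MeasurableSet A) :
    MeasurableSet[pathSigma 𝕏 n] {ω : ℕ → 𝕏 | ω i ∈ A} :=
  measurable_coord_pathSigma h hA

lemma measurable_shift (n : ℕ) : Measurable (shift (𝕏 := 𝕏) n) :=
  measurable_pi_lambda _ fun t => measurable_pi_apply (n + t)

/-- box cylinders -/
def boxes (𝕏 : Type*) [MeasurableSpace 𝕏] : Set (Set (ℕ → 𝕏)) :=
  {C | ∃ (N : ℕ) (A : ℕ → Set 𝕏), (∀ i, MeasurableSet (A i)) ∧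
    C = {ω | ∀ i, i ≤ N → ω i ∈ A i}}

lemma isPiSystem_boxes : IsPiSystem (boxes 𝕏) := by
  rintro C ⟨N, A, hA, rfl⟩ C' ⟨N', A', hA', rfl⟩ -
  refine ⟨max N N', fun i => (if i ≤ N then A i else univ) ∩ (if i ≤ N' then A' i else univ),
    fun i => MeasurableSet.inter (by split_ifs; exacts [hA i, MeasurableSet.univ])
      (by split_ifs; exacts [hA' i, MeasurableSet.univ]), ?_⟩
  ext ω
  simp only [mem_inter_iff, mem_setOf_eq]
  constructor
  · rintro ⟨h1, h2⟩ i hi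
    constructor
    · split_ifs with h; exact h1 i h; trivial
    · split_ifs with h; exact h2 i h; trivial
  · intro h
    constructor
    · intro i hi
      have := (h i (le_trans hi (le_max_left _ _))).1
      rwa [if_pos hi] at this
    · intro i hi
      have := (h i (le_trans hi (le_max_right _ _))).2
      rwa [if_pos hi] at this

lemma measurableSet_box {N : ℕ} {A : ℕ → Set 𝕏} (hA : ∀ i, MeasurableSet (A i)) :
    MeasurableSet {ω : ℕ → 𝕏 | ∀ i, i ≤ N → ω i ∈ A i} := by
  have : {ω : ℕ → 𝕏 | ∀ i, i ≤ N → ω i ∈ A i} =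
      ⋂ (i : ℕ) (_ : i ≤ N), (fun ω : ℕ → 𝕏 => ω i) ⁻¹' (A i) := by
    ext ω; simp [Set.mem_iInter]
  rw [this]
  exact MeasurableSet.iInter fun i => MeasurableSet.iInter fun _ =>
    (measurable_pi_apply i) (hA i)

lemma pi_eq_generateFrom_boxes :
    (MeasurableSpace.pi : MeasurableSpace (ℕ → 𝕏)) = .generateFrom (boxes 𝕏) := by
  refine le_antisymm ?_ ?_
  · rw [MeasurableSpace.pi]
    refine iSup_le fun i => ?_
    rw [← measurable_iff_comap_le]
    intro A hA
    have : (fun ω : ℕ → 𝕏 => ω i) ⁻¹' A =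
        {ω : ℕ → 𝕏 | ∀ j, j ≤ i → ω j ∈ (fun j => if j = i then A else univ) j} := by
      ext ω
      simp only [mem_preimage, mem_setOf_eq]
      constructor
      · intro h j hj
        split_ifs with hji
        · subst hji; exact h
        · trivial
      · intro h
        have := h i le_rfl
        rwa [if_pos rfl] at this
    rw [this]
    exact MeasurableSpace.measurableSet_generateFrom
      ⟨i, _, fun j => by split_ifs; exacts [hA, MeasurableSet.univ], rfl⟩
  · refine MeasurableSpace.generateFrom_le ?_
    rintro C ⟨N, A, hA, rfl⟩
    exact measurableSet_box hA

/-- the event that the hit time of `S` after shifting by `m` equals `j`, is `F_{m+j}`-measurable -/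
lemma measurableSet_hitTime_shift {S : Set 𝕏} (hS : MeasurableSet S) (m j : ℕ) :
    MeasurableSet[pathSigma 𝕏 (m + j)] {ω : ℕ → 𝕏 | hitTime S (shift m ω) = (j : ℕ∞)} := by
  rcases Nat.eq_zero_or_pos j with rfl | hj
  · have : {ω : ℕ → 𝕏 | hitTime S (shift m ω) = ((0:ℕ) : ℕ∞)} = ∅ := by
      ext ω; simp only [mem_setOf_eq, mem_empty_iff_false, iff_false]
      intro h; exact hitTime_ne_zero (by exact_mod_cast h)
    rw [this]; exact @MeasurableSet.empty _ (pathSigma 𝕏 (m + 0))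
  · have : {ω : ℕ → 𝕏 | hitTime S (shift m ω) = (j : ℕ∞)} =
        {ω : ℕ → 𝕏 | ω (m + j) ∈ S} ∩ ⋂ (s : ℕ) (_ : 1 ≤ s) (_ : s < j), {ω : ℕ → 𝕏 | ω (m + s) ∉ S} := by
      ext ω
      simp only [mem_setOf_eq, mem_inter_iff, mem_iInter]
      constructor
      · intro h
        obtain ⟨h1, h2, h3⟩ := hitTime_spec h
        exact ⟨h2, fun s hs1 hsj => h3 s hs1 hsj⟩
      · rintro ⟨h1, h2⟩
        exact hitTime_eq_coe hj h1 (fun s hs1 hsj => h2 s hs1 hsj)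
    rw [this]
    refine (measurableSet_coord le_rfl hS).inter ?_
    refine MeasurableSet.iInter fun s => MeasurableSet.iInter fun _ => MeasurableSet.iInter fun hsj => ?_
    exact (measurableSet_coord (by omega) hS).compl

lemma measurableSet_hitTime_eq {S : Set 𝕏} (hS : MeasurableSet S) (j : ℕ) :
    MeasurableSet[pathSigma 𝕏 j] {ω : ℕ → 𝕏 | hitTime S ω = (j : ℕ∞)} := by
  have h0 := measurableSet_hitTime_shift (𝕏 := 𝕏) hS 0 j
  rw [Nat.zero_add] at h0
  have hsh : ∀ ω : ℕ → 𝕏, shift 0 ω = ω := fun ω => funext fun t => by simp [shift]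
  simpa [hsh] using h0


end sigma

section markov
variable [m𝕏 : MeasurableSpace 𝕏]
variable (Pr : Kernel 𝕏 (ℕ → 𝕏)) [IsMarkovKernel Pr] (Q : Kernel 𝕏 𝕏) [IsMarkovKernel Q]

/-- iterated kernel over a box -/
def G : ℕ → 𝕏 → (ℕ → Set 𝕏) → ℝ≥0∞
  | 0 => fun y A => Q y (A 0)
  | (m+1) => fun y A => ∫⁻ z, (A 0).indicator (fun z' => G m z' (fun i => A (i+1))) z ∂ Q y

lemma measurable_G (m : ℕ) (A : ℕ → Set 𝕏) (hA : ∀ i, MeasurableSet (A i)) :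
    Measurable (fun y => G Q m y A) := by
  induction m generalizing A with
  | zero => exact Kernel.measurable_coe Q (hA 0)
  | succ m ih =>
    have hm : Measurable (fun z => (A 0).indicator
        (fun z' => G Q m z' (fun i => A (i+1))) z) :=
      ((ih _ (fun i => hA (i+1)))).indicator (hA 0)
    exact Measurable.lintegral_kernel_prod_right' (f := fun p : 𝕏 × 𝕏 => (A 0).indicator
      (fun z' => G Q m z' (fun i => A (i+1))) p.2) (hm.comp measurable_snd)

variable {Pr Q}
variable (hc : IsMarkovChainLaw Pr Q)
include hc

/-- one-step Markov property, functional form -/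
lemma markov_fun_step (x : 𝕏) (n : ℕ) {B : Set (ℕ → 𝕏)}
    (hB : MeasurableSet[pathSigma 𝕏 n] B) {g : 𝕏 → ℝ≥0∞} (hg : Measurable g) :
    ∫⁻ ω in B, g (ω (n+1)) ∂ Pr x = ∫⁻ ω in B, ∫⁻ z, g z ∂ Q (ω n) ∂ Pr x := by
  have hBpi : MeasurableSet B := pathSigma_le_pi n B hB
  have hκ : Measurable (fun ω : ℕ → 𝕏 => Q (ω n)) :=
    Q.measurable.comp (measurable_pi_apply n)
  have hmap : ((Pr x).restrict B).map (fun ω => ω (n+1)) =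
      ((Pr x).restrict B).bind (fun ω => Q (ω n)) := by
    refine Measure.ext fun s hs => ?_
    rw [Measure.map_apply (measurable_pi_apply (n+1)) hs,
      Measure.restrict_apply (measurable_pi_apply (n+1) hs),
      Measure.bind_apply hs hκ.aemeasurable]
    have : (fun ω : ℕ → 𝕏 => ω (n+1)) ⁻¹' s ∩ B = B ∩ {ω | ω (n+1) ∈ s} := by
      ext ω; constructor
      · rintro ⟨h1, h2⟩; exact ⟨h2, h1⟩
      · rintro ⟨h1, h2⟩; exact ⟨h2, h1⟩
    rw [this, hc.markov x n B hB s hs]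
  calc ∫⁻ ω in B, g (ω (n+1)) ∂ Pr x
      = ∫⁻ y, g y ∂ (((Pr x).restrict B).map (fun ω => ω (n+1))) :=
        (lintegral_map hg (measurable_pi_apply (n+1))).symm
    _ = ∫⁻ y, g y ∂ (((Pr x).restrict B).bind (fun ω => Q (ω n))) := by rw [hmap]
    _ = ∫⁻ ω in B, ∫⁻ z, g z ∂ Q (ω n) ∂ Pr x := Measure.lintegral_bind hκ.aemeasurable hg.aemeasurable

/-- restrict-to-coordinate-event helper -/
lemma lintegral_restrict_coord_event (x : 𝕏) (n : ℕ) {B : Set (ℕ → 𝕏)}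
    (hB : MeasurableSet B) {A : Set 𝕏} (hA : MeasurableSet A)
    {h : 𝕏 → ℝ≥0∞} :
    ∫⁻ ω in B ∩ {ω | ω n ∈ A}, h (ω n) ∂ Pr x
      = ∫⁻ ω in B, A.indicator h (ω n) ∂ Pr x := by
  have hE : MeasurableSet ((fun ω : ℕ → 𝕏 => ω n) ⁻¹' A) := measurable_pi_apply n hA
  have h1 : B ∩ {ω : ℕ → 𝕏 | ω n ∈ A} = ((fun ω : ℕ → 𝕏 => ω n) ⁻¹' A) ∩ B := by
    ext ω; constructor
    · rintro ⟨h1, h2⟩; exact ⟨h2, h1⟩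
    · rintro ⟨h1, h2⟩; exact ⟨h2, h1⟩
  rw [h1, ← Measure.restrict_restrict hE, ← lintegral_indicator hE]
  refine lintegral_congr fun ω => ?_
  by_cases hω : ω n ∈ A <;> simp [Set.indicator, hω]

/-- finite-dimensional Markov formula -/
lemma FD : ∀ (m n : ℕ) (x : 𝕏) (B : Set (ℕ → 𝕏)), MeasurableSet[pathSigma 𝕏 n] B →
    ∀ (A : ℕ → Set 𝕏), (∀ i, MeasurableSet (A i)) →
    Pr x (B ∩ {ω | ∀ i, i ≤ m → ω (n+1+i) ∈ A i}) = ∫⁻ ω in B, G Q m (ω n) A ∂ Pr x := by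
  intro m
  induction m with
  | zero =>
    intro n x B hB A hA
    have : {ω : ℕ → 𝕏 | ∀ i, i ≤ 0 → ω (n+1+i) ∈ A i} = {ω | ω (n+1) ∈ A 0} := by
      ext ω; simp [Nat.le_zero]
    rw [this, hc.markov x n B hB (A 0) (hA 0)]
    rfl
  | succ m ih =>
    intro n x B hB A hA
    have hsplit : B ∩ {ω : ℕ → 𝕏 | ∀ i, i ≤ m + 1 → ω (n+1+i) ∈ A i} =
        (B ∩ {ω | ω (n+1) ∈ A 0}) ∩ {ω | ∀ i, i ≤ m → ω ((n+1)+1+i) ∈ A (i+1)} := by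
      ext ω
      simp only [mem_inter_iff, mem_setOf_eq, and_assoc]
      constructor
      · intro ⟨hb, h⟩
        refine ⟨hb, by simpa using h 0 (by omega), fun i hi => ?_⟩
        have := h (i+1) (by omega)
        convert this using 2
        omega
      · intro ⟨hb, h0, h⟩
        refine ⟨hb, fun i hi => ?_⟩
        match i with
        | 0 => simpa using h0
        | (j+1) =>
          have := h j (by omega)
          convert this using 2
          omega
    have hB' : MeasurableSet[pathSigma 𝕏 (n+1)] (B ∩ {ω : ℕ → 𝕏 | ω (n+1) ∈ A 0}) :=
      ((pathSigma_mono (Nat.le_succ n)) B hB).inter (measurableSet_coord le_rfl (hA 0))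
    rw [hsplit, ih (n+1) x _ hB' (fun i => A (i+1)) (fun i => hA (i+1))]
    have hBpi : MeasurableSet B := pathSigma_le_pi n B hB
    rw [lintegral_restrict_coord_event hc x (n+1) hBpi (hA 0)
      (h := fun y => G Q m y (fun i => A (i+1)))]
    rw [markov_fun_step hc x n hB
      (((measurable_G Q m _ (fun i => hA (i+1)))).indicator (hA 0))]
    rfl

end markov

section markov2
variable [m𝕏 : MeasurableSpace 𝕏] [MeasurableSingletonClass 𝕏]
variable {Pr : Kernel 𝕏 (ℕ → 𝕏)} [IsMarkovKernel Pr] {Q : Kernel 𝕏 𝕏} [IsMarkovKernel Q]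
variable (hc : IsMarkovChainLaw Pr Q)
include hc

omit hc in
lemma measurableSet_start (y : 𝕏) : MeasurableSet {ω : ℕ → 𝕏 | ω 0 = y} := by
  have : {ω : ℕ → 𝕏 | ω 0 = y} = (fun ω : ℕ → 𝕏 => ω 0) ⁻¹' {y} := rfl
  rw [this]
  exact (measurable_pi_apply 0) (measurableSet_singleton y)

lemma ae_start (y : 𝕏) : ∀ᵐ ω ∂ Pr y, ω 0 = y := by
  have hD : MeasurableSet {ω : ℕ → 𝕏 | ω 0 = y} := measurableSet_start y
  rw [ae_iff]
  have : {ω : ℕ → 𝕏 | ¬ ω 0 = y} = {ω : ℕ → 𝕏 | ω 0 = y}ᶜ := rfl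
  rw [this, measure_compl hD (measure_ne_top _ _), hc.start y]
  simp

lemma Pr_box_zero (y : 𝕏) (A : ℕ → Set 𝕏) (hA0 : MeasurableSet (A 0)) :
    Pr y {ω | ∀ i, i ≤ 0 → ω i ∈ A i} = (A 0).indicator (fun _ => 1) y := by
  have hset : {ω : ℕ → 𝕏 | ∀ i, i ≤ 0 → ω i ∈ A i} = {ω | ω 0 ∈ A 0} := by
    ext ω; simp [Nat.le_zero]
  rw [hset]
  by_cases hy : y ∈ A 0
  · rw [Set.indicator_of_mem hy]
    refine le_antisymm prob_le_one ?_
    have hsub : {ω : ℕ → 𝕏 | ω 0 = y} ⊆ {ω : ℕ → 𝕏 | ω 0 ∈ A 0} := by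
      intro ω hω; rw [mem_setOf_eq, hω]; exact hy
    calc (1 : ℝ≥0∞) = Pr y {ω | ω 0 = y} := (hc.start y).symm
      _ ≤ Pr y {ω | ω 0 ∈ A 0} := measure_mono hsub
  · rw [Set.indicator_of_notMem hy]
    have hsub : {ω : ℕ → 𝕏 | ω 0 ∈ A 0} ⊆ {ω : ℕ → 𝕏 | ω 0 = y}ᶜ := by
      intro ω hω hmem
      rw [mem_setOf_eq] at hmem hω
      rw [hmem] at hω; exact hy hω
    have h0 : Pr y {ω : ℕ → 𝕏 | ω 0 = y}ᶜ = 0 := by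
      rw [measure_compl (measurableSet_start y) (measure_ne_top _ _), hc.start y]
      simp
    exact le_antisymm (h0 ▸ measure_mono hsub) (zero_le)

lemma Pr_box_succ (m : ℕ) (y : 𝕏) (A : ℕ → Set 𝕏) (hA : ∀ i, MeasurableSet (A i)) :
    Pr y {ω | ∀ i, i ≤ m + 1 → ω i ∈ A i}
      = (A 0).indicator (fun y' => G Q m y' (fun i => A (i+1))) y := by
  have hB0 : MeasurableSet[pathSigma 𝕏 0] {ω : ℕ → 𝕏 | ω 0 ∈ A 0} :=
    measurableSet_coord le_rfl (hA 0)
  have hB0pi : MeasurableSet {ω : ℕ → 𝕏 | ω 0 ∈ A 0} := pathSigma_le_pi 0 _ hB0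
  have hsplit : {ω : ℕ → 𝕏 | ∀ i, i ≤ m + 1 → ω i ∈ A i} =
      {ω : ℕ → 𝕏 | ω 0 ∈ A 0} ∩ {ω | ∀ i, i ≤ m → ω (0+1+i) ∈ A (i+1)} := by
    ext ω
    simp only [mem_inter_iff, mem_setOf_eq]
    constructor
    · intro h
      refine ⟨h 0 (by omega), fun i hi => ?_⟩
      have := h (i+1) (by omega)
      convert this using 2
      omega
    · rintro ⟨h0, h⟩ i hi
      match i with
      | 0 => exact h0
      | (j+1) =>
        have := h j (by omega)
        convert this using 2
        omega
  rw [hsplit, FD hc m 0 y _ hB0 (fun i => A (i+1)) (fun i => hA (i+1))]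
  have hGmeas := measurable_G Q m (fun i => A (i+1)) (fun i => hA (i+1))
  rw [← lintegral_indicator hB0pi]
  have hcongr : ∀ᵐ ω ∂ Pr y,
      ({ω : ℕ → 𝕏 | ω 0 ∈ A 0}).indicator (fun ω => G Q m (ω 0) (fun i => A (i+1))) ω
        = (A 0).indicator (fun y' => G Q m y' (fun i => A (i+1))) y := by
    filter_upwards [ae_start hc y] with ω hω
    by_cases hy : y ∈ A 0
    · rw [Set.indicator_of_mem (by rw [mem_setOf_eq, hω]; exact hy),
        Set.indicator_of_mem hy, hω]
    · rw [Set.indicator_of_notMem (by rw [mem_setOf_eq, hω]; exact hy),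
        Set.indicator_of_notMem hy]
  rw [lintegral_congr_ae hcongr, lintegral_const]
  simp

lemma markov_shift_set (n : ℕ) (x : 𝕏) {B : Set (ℕ → 𝕏)}
    (hB : MeasurableSet[pathSigma 𝕏 n] B) {C : Set (ℕ → 𝕏)} (hC : MeasurableSet C) :
    Pr x (B ∩ shift n ⁻¹' C) = ∫⁻ ω in B, Pr (ω n) C ∂ Pr x := by
  have hBpi : MeasurableSet B := pathSigma_le_pi n B hB
  have key : ∀ ⦃C : Set (ℕ → 𝕏)⦄, MeasurableSet C →
      Pr x (B ∩ shift n ⁻¹' C) = ∫⁻ ω in B, Pr (ω n) C ∂ Pr x := by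
    refine MeasurableSpace.induction_on_inter
      (pi_eq_generateFrom_boxes (𝕏 := 𝕏)) isPiSystem_boxes ?_ ?_ ?_ ?_
    · simp
    · intro C hCb
      obtain ⟨N, A, hA, rfl⟩ := hCb
      match N with
      | 0 =>
        have hpre : shift n ⁻¹' {ω : ℕ → 𝕏 | ∀ i, i ≤ 0 → ω i ∈ A i} = {ω | ω n ∈ A 0} := by
          ext ω; simp [Nat.le_zero, shift]
        rw [hpre]
        have : Pr x (B ∩ {ω | ω n ∈ A 0}) = ∫⁻ ω in B ∩ {ω | ω n ∈ A 0}, 1 ∂ Pr x := by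
          rw [setLIntegral_one]
        rw [this, lintegral_restrict_coord_event hc x n hBpi (hA 0) (h := fun _ => 1)]
        refine lintegral_congr fun ω => ?_
        rw [Pr_box_zero hc (ω n) A (hA 0)]
      | (N'+1) =>
        have hpre : shift n ⁻¹' {ω : ℕ → 𝕏 | ∀ i, i ≤ N' + 1 → ω i ∈ A i} =
            {ω : ℕ → 𝕏 | ω n ∈ A 0} ∩ {ω | ∀ i, i ≤ N' → ω (n+1+i) ∈ A (i+1)} := by
          ext ω
          simp only [mem_preimage, mem_inter_iff, mem_setOf_eq, shift_apply]
          constructor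
          · intro h
            refine ⟨by simpa using h 0 (by omega), fun i hi => ?_⟩
            have := h (i+1) (by omega)
            convert this using 2
            omega
          · rintro ⟨h0, h⟩ i hi
            match i with
            | 0 => simpa using h0
            | (j+1) =>
              have := h j (by omega)
              convert this using 2
              omega
        have hB'' : MeasurableSet[pathSigma 𝕏 n] (B ∩ {ω : ℕ → 𝕏 | ω n ∈ A 0}) :=
          hB.inter (measurableSet_coord le_rfl (hA 0))
        rw [hpre, ← Set.inter_assoc,
          FD hc N' n x _ hB'' (fun i => A (i+1)) (fun i => hA (i+1)),
          lintegral_restrict_coord_event hc x n hBpi (hA 0)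
            (h := fun y => G Q N' y (fun i => A (i+1)))]
        refine lintegral_congr fun ω => ?_
        rw [Pr_box_succ hc N' (ω n) A hA]
    · intro C hCm hP
      have hmeasC : Measurable (fun ω : ℕ → 𝕏 => Pr (ω n) C) :=
        (Kernel.measurable_coe Pr hCm).comp (measurable_pi_apply n)
      have hsub : B ∩ shift n ⁻¹' C ⊆ B := inter_subset_left
      have hmeas2 : MeasurableSet (B ∩ shift n ⁻¹' C) := hBpi.inter ((measurable_shift n) hCm)
      have hseteq : B ∩ shift n ⁻¹' Cᶜ = B \ (B ∩ shift n ⁻¹' C) := by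
        ext ω
        simp only [mem_inter_iff, mem_preimage, mem_compl_iff, mem_diff, not_and]
        tauto
      have hfin : ∫⁻ ω in B, Pr (ω n) C ∂ Pr x ≠ ⊤ := by
        refine ne_of_lt (lt_of_le_of_lt ?_ (lt_of_le_of_lt (?_ : Pr x B ≤ 1) ENNReal.one_lt_top))
        · calc ∫⁻ ω in B, Pr (ω n) C ∂ Pr x ≤ ∫⁻ _ in B, 1 ∂ Pr x :=
                lintegral_mono fun ω => prob_le_one
            _ = Pr x B := setLIntegral_one B
        · exact prob_le_one
      rw [hseteq, measure_diff hsub hmeas2.nullMeasurableSet (measure_ne_top _ _), hP]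
      have hptw : ∫⁻ ω in B, Pr (ω n) Cᶜ ∂ Pr x = ∫⁻ ω in B, 1 - Pr (ω n) C ∂ Pr x := by
        refine lintegral_congr fun ω => ?_
        rw [measure_compl hCm (measure_ne_top _ _)]
        simp
      rw [hptw, lintegral_sub hmeasC hfin (Filter.Eventually.of_forall fun ω => prob_le_one),
        setLIntegral_one]
    · intro g hdisj hgm hP
      have hpre : B ∩ shift n ⁻¹' (⋃ i, g i) = ⋃ i, B ∩ shift n ⁻¹' g i := by
        rw [Set.preimage_iUnion, Set.inter_iUnion]
      have hdisj2 : Pairwise (Function.onFun Disjoint fun i => B ∩ shift n ⁻¹' g i) := by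
        intro i j hij
        exact Disjoint.mono inter_subset_right inter_subset_right
          ((hdisj hij).preimage (shift n))
      have hmeas2 : ∀ i, MeasurableSet (B ∩ shift n ⁻¹' g i) :=
        fun i => hBpi.inter ((measurable_shift n) (hgm i))
      rw [hpre, measure_iUnion hdisj2 hmeas2]
      have hcnt : ∀ ω : ℕ → 𝕏, Pr (ω n) (⋃ i, g i) = ∑' i, Pr (ω n) (g i) :=
        fun ω => measure_iUnion (fun i j hij => hdisj hij) hgm
      calc ∑' i, Pr x (B ∩ shift n ⁻¹' g i) = ∑' i, ∫⁻ ω in B, Pr (ω n) (g i) ∂ Pr x :=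
            tsum_congr fun i => hP i
        _ = ∫⁻ ω in B, ∑' i, Pr (ω n) (g i) ∂ Pr x :=
            (lintegral_tsum fun i => ((Kernel.measurable_coe Pr (hgm i)).comp
              (measurable_pi_apply n)).aemeasurable).symm
        _ = ∫⁻ ω in B, Pr (ω n) (⋃ i, g i) ∂ Pr x := lintegral_congr fun ω => (hcnt ω).symm
  exact key hC

lemma markov_shift_fun (n : ℕ) (x : 𝕏) {B : Set (ℕ → 𝕏)}
    (hB : MeasurableSet[pathSigma 𝕏 n] B) {g : (ℕ → 𝕏) → ℝ≥0∞} (hg : Measurable g) :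
    ∫⁻ ω in B, g (shift n ω) ∂ Pr x = ∫⁻ ω in B, ∫⁻ ω', g ω' ∂ Pr (ω n) ∂ Pr x := by
  have hBpi : MeasurableSet B := pathSigma_le_pi n B hB
  have hκ : Measurable (fun ω : ℕ → 𝕏 => Pr (ω n)) :=
    Pr.measurable.comp (measurable_pi_apply n)
  have hmap : ((Pr x).restrict B).map (shift n) =
      ((Pr x).restrict B).bind (fun ω => Pr (ω n)) := by
    refine Measure.ext fun s hs => ?_
    rw [Measure.map_apply (measurable_shift n) hs,
      Measure.restrict_apply ((measurable_shift n) hs),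
      Measure.bind_apply hs hκ.aemeasurable]
    have : shift n ⁻¹' s ∩ B = B ∩ shift n ⁻¹' s := Set.inter_comm _ _
    rw [this, markov_shift_set hc n x hB hs]
  calc ∫⁻ ω in B, g (shift n ω) ∂ Pr x
      = ∫⁻ ω', g ω' ∂ (((Pr x).restrict B).map (shift n)) :=
        (lintegral_map hg (measurable_shift n)).symm
    _ = ∫⁻ ω', g ω' ∂ (((Pr x).restrict B).bind (fun ω => Pr (ω n))) := by rw [hmap]
    _ = ∫⁻ ω in B, ∫⁻ ω', g ω' ∂ Pr (ω n) ∂ Pr x := Measure.lintegral_bind hκ.aemeasurable hg.aemeasurable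

end markov2

section payoff
variable [m𝕏 : MeasurableSpace 𝕏]
variable (δ : ℕ → ℝ) (f : 𝕏 → ℝ)

/-- discounted payoff collected at the (possibly infinite) time `τ ω` -/
def payoffAt (τ : (ℕ → 𝕏) → ℕ∞) (ω : ℕ → 𝕏) : ℝ≥0∞ :=
  if τ ω = ⊤ then 0 else ENNReal.ofReal (δ (τ ω).toNat * f (ω (τ ω).toNat))

lemma payoffAt_congr {τ τ' : (ℕ → 𝕏) → ℕ∞} {ω : ℕ → 𝕏} (h : τ ω = τ' ω) :
    payoffAt δ f τ ω = payoffAt δ f τ' ω := by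
  unfold payoffAt; rw [h]

lemma payoffAt_of_eq_top {τ : (ℕ → 𝕏) → ℕ∞} {ω : ℕ → 𝕏} (h : τ ω = ⊤) :
    payoffAt δ f τ ω = 0 := by
  rw [payoffAt, if_pos h]

lemma payoffAt_of_eq_coe {τ : (ℕ → 𝕏) → ℕ∞} {ω : ℕ → 𝕏} {t : ℕ} (h : τ ω = (t : ℕ∞)) :
    payoffAt δ f τ ω = ENNReal.ofReal (δ t * f (ω t)) := by
  rw [payoffAt, if_neg (by rw [h]; simp), h]
  simp

lemma payoffAt_eq_tsum (τ : (ℕ → 𝕏) → ℕ∞) (ω : ℕ → 𝕏) :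
    payoffAt δ f τ ω = ∑' t : ℕ,
      ({ω' | τ ω' = (t : ℕ∞)}).indicator (fun ω' => ENNReal.ofReal (δ t * f (ω' t))) ω := by
  cases hτ : τ ω with
  | top =>
    rw [payoffAt, if_pos hτ]
    symm
    have : ∀ t : ℕ, ({ω' | τ ω' = (t : ℕ∞)}).indicator
        (fun ω' => ENNReal.ofReal (δ t * f (ω' t))) ω = 0 := by
      intro t
      refine Set.indicator_of_notMem ?_ _
      rw [mem_setOf_eq, hτ]; simp
    simp [this]
  | coe t0 =>
    rw [payoffAt, if_neg (by rw [hτ]; simp)]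
    rw [tsum_eq_single t0 ?_]
    · rw [Set.indicator_of_mem (by rwa [mem_setOf_eq]), hτ]
      simp
    · intro t ht
      refine Set.indicator_of_notMem ?_ _
      rw [mem_setOf_eq, hτ]
      exact_mod_cast fun h => ht (by exact_mod_cast h.symm)

lemma payoffAt_le {C : ℝ} (hδ_mem : ∀ k, δ k ∈ Set.Icc (0:ℝ) 1)
    (hf_nonneg : ∀ x, 0 ≤ f x) (hf_bdd : ∀ x, f x ≤ C)
    (τ : (ℕ → 𝕏) → ℕ∞) (ω : ℕ → 𝕏) :
    payoffAt δ f τ ω ≤ ENNReal.ofReal C := by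
  rw [payoffAt]
  split_ifs with h
  · exact zero_le
  · refine ENNReal.ofReal_le_ofReal ?_
    calc δ (τ ω).toNat * f (ω (τ ω).toNat) ≤ 1 * C :=
          mul_le_mul (hδ_mem _).2 (hf_bdd _) (hf_nonneg _) zero_le_one
      _ = C := one_mul C

lemma measurable_payoffAt (hf : Measurable f) {τ : (ℕ → 𝕏) → ℕ∞}
    (hτ : ∀ t : ℕ, MeasurableSet {ω' : ℕ → 𝕏 | τ ω' = (t : ℕ∞)}) :
    Measurable (payoffAt δ f τ) := by
  have : payoffAt δ f τ = fun ω => ∑' t : ℕ,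
      ({ω' | τ ω' = (t : ℕ∞)}).indicator (fun ω' => ENNReal.ofReal (δ t * f (ω' t))) ω :=
    funext fun ω => payoffAt_eq_tsum δ f τ ω
  rw [this]
  refine Measurable.ennreal_tsum fun t => Measurable.indicator ?_ (hτ t)
  exact ENNReal.measurable_ofReal.comp (measurable_const.mul (hf.comp (measurable_pi_apply t)))

variable (Pr : Kernel 𝕏 (ℕ → 𝕏)) [IsMarkovKernel Pr]

/-- the expected discounted payoff of the first-hit rule of `V`, `ℝ≥0∞`-valued -/
def JE (V : Set 𝕏) (x : 𝕏) : ℝ≥0∞ := ∫⁻ ω, payoffAt δ f (hitTime V) ω ∂ Pr x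

variable {δ f}

lemma measurableSet_hitTime_eq' {V : Set 𝕏} (hV : MeasurableSet V) (t : ℕ) :
    MeasurableSet {ω' : ℕ → 𝕏 | hitTime V ω' = (t : ℕ∞)} :=
  pathSigma_le_pi t _ (measurableSet_hitTime_eq hV t)

lemma measurable_payoff_hit (hf : Measurable f) {V : Set 𝕏} (hV : MeasurableSet V) :
    Measurable (payoffAt δ f (hitTime V)) :=
  measurable_payoffAt δ f hf (measurableSet_hitTime_eq' hV)

lemma JE_le {C : ℝ} (hδ_mem : ∀ k, δ k ∈ Set.Icc (0:ℝ) 1)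
    (hf_nonneg : ∀ x, 0 ≤ f x) (hf_bdd : ∀ x, f x ≤ C) (V : Set 𝕏) (x : 𝕏) :
    JE δ f Pr V x ≤ ENNReal.ofReal C := by
  rw [JE]
  calc ∫⁻ ω, payoffAt δ f (hitTime V) ω ∂ Pr x
      ≤ ∫⁻ _, ENNReal.ofReal C ∂ Pr x :=
        lintegral_mono fun ω => payoffAt_le δ f hδ_mem hf_nonneg hf_bdd _ ω
    _ = ENNReal.ofReal C := by simp

lemma JE_ne_top {C : ℝ} (hδ_mem : ∀ k, δ k ∈ Set.Icc (0:ℝ) 1)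
    (hf_nonneg : ∀ x, 0 ≤ f x) (hf_bdd : ∀ x, f x ≤ C) (V : Set 𝕏) (x : 𝕏) :
    JE δ f Pr V x ≠ ⊤ :=
  ne_of_lt (lt_of_le_of_lt (JE_le Pr hδ_mem hf_nonneg hf_bdd V x) ENNReal.ofReal_lt_top)

lemma measurable_JE (hf : Measurable f) {V : Set 𝕏} (hV : MeasurableSet V) :
    Measurable (JE δ f Pr V) := by
  refine Measurable.lintegral_kernel_prod_right'
    (f := fun p : 𝕏 × (ℕ → 𝕏) => payoffAt δ f (hitTime V) p.2) ?_
  exact (measurable_payoff_hit hf hV).comp measurable_snd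

end payoff

section sseqdef
variable {St U V₁ V₂ A : Set 𝕏}

/-- the next waiting target -/
def nxtSet (U V₁ V₂ : Set 𝕏) (y : 𝕏) : Set 𝕏 := if y ∈ U then V₁ else V₂

lemma subset_nxtSet (hA₁ : A ⊆ V₁) (hA₂ : A ⊆ V₂) (y : 𝕏) : A ⊆ nxtSet U V₁ V₂ y := by
  rw [nxtSet]; split_ifs; exacts [hA₁, hA₂]

variable (St U V₁ V₂ A) in
/-- the alternating sequence of stopping rules -/
def sseq : ℕ → (ℕ → 𝕏) → ℕ∞
  | 0 => hitTime St
  | (k+1) => fun ω =>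
      if ω ((sseq k ω).toNat) ∈ A then sseq k ω
      else sseq k ω + hitTime (nxtSet U V₁ V₂ (ω ((sseq k ω).toNat))) (shift (sseq k ω).toNat ω)

lemma sseq_zero (ω : ℕ → 𝕏) : sseq St U V₁ V₂ A 0 ω = hitTime St ω := rfl

lemma sseq_succ_def (k : ℕ) (ω : ℕ → 𝕏) : sseq St U V₁ V₂ A (k+1) ω =
    (if ω ((sseq St U V₁ V₂ A k ω).toNat) ∈ A then sseq St U V₁ V₂ A k ω
      else sseq St U V₁ V₂ A k ω
        + hitTime (nxtSet U V₁ V₂ (ω ((sseq St U V₁ V₂ A k ω).toNat)))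
          (shift (sseq St U V₁ V₂ A k ω).toNat ω)) := rfl

lemma one_le_sseq (k : ℕ) (ω : ℕ → 𝕏) : 1 ≤ sseq St U V₁ V₂ A k ω := by
  induction k with
  | zero => exact hitTime_pos
  | succ k ih =>
    rw [sseq_succ_def]
    split_ifs
    · exact ih
    · exact le_trans ih le_self_add

lemma sseq_top {k : ℕ} {ω : ℕ → 𝕏} (h : sseq St U V₁ V₂ A k ω = ⊤) :
    sseq St U V₁ V₂ A (k+1) ω = ⊤ := by
  rw [sseq_succ_def]
  split_ifs
  · exact h
  · rw [h, top_add]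

lemma sseq_succ_of_mem {k : ℕ} {ω : ℕ → 𝕏} {n : ℕ} (h : sseq St U V₁ V₂ A k ω = (n : ℕ∞))
    (hmem : ω n ∈ A) : sseq St U V₁ V₂ A (k+1) ω = (n : ℕ∞) := by
  rw [sseq_succ_def, h]
  simp only [ENat.toNat_coe]
  rw [if_pos hmem]

lemma sseq_succ_of_not_mem {k : ℕ} {ω : ℕ → 𝕏} {n : ℕ} (h : sseq St U V₁ V₂ A k ω = (n : ℕ∞))
    (hmem : ω n ∉ A) : sseq St U V₁ V₂ A (k+1) ω
      = (n : ℕ∞) + hitTime (nxtSet U V₁ V₂ (ω n)) (shift n ω) := by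
  rw [sseq_succ_def, h]
  simp only [ENat.toNat_coe]
  rw [if_neg hmem]

lemma sseq_stab {k : ℕ} {ω : ℕ → 𝕏} {n : ℕ} (h : sseq St U V₁ V₂ A k ω = (n : ℕ∞))
    (hmem : ω n ∈ A) : ∀ j, k ≤ j → sseq St U V₁ V₂ A j ω = (n : ℕ∞) := by
  intro j hj
  induction j with
  | zero =>
    have : k = 0 := by omega
    subst this; exact h
  | succ j ih =>
    rcases Nat.lt_or_ge k (j+1) with hlt | hge
    · have hj' : sseq St U V₁ V₂ A j ω = (n : ℕ∞) := ih (by omega)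
      exact sseq_succ_of_mem hj' hmem
    · have : k = j + 1 := by omega
      subst this; exact h

lemma sseq_state {k : ℕ} {ω : ℕ → 𝕏} {n : ℕ} (h : sseq St U V₁ V₂ A k ω = (n : ℕ∞)) :
    ω n ∈ St ∪ V₁ ∪ V₂ := by
  induction k generalizing n with
  | zero => exact Or.inl (Or.inl (mem_of_hitTime_eq h))
  | succ k ih =>
    by_cases htop : sseq St U V₁ V₂ A k ω = ⊤
    · rw [sseq_top htop] at h; simp at h
    · obtain ⟨m, hm⟩ : ∃ m : ℕ, sseq St U V₁ V₂ A k ω = (m : ℕ∞) := by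
        cases hc : sseq St U V₁ V₂ A k ω with
        | top => exact absurd hc htop
        | coe m => exact ⟨m, rfl⟩
      by_cases hmem : ω m ∈ A
      · rw [sseq_succ_of_mem hm hmem] at h
        have : m = n := by exact_mod_cast h
        subst this; exact ih hm
      · rw [sseq_succ_of_not_mem hm hmem] at h
        cases hh : hitTime (nxtSet U V₁ V₂ (ω m)) (shift m ω) with
        | top => rw [hh, add_top] at h; simp at h
        | coe j =>
          rw [hh, ← Nat.cast_add] at h
          have hmn : m + j = n := by exact_mod_cast h
          have hmem2 := mem_of_hitTime_eq hh
          rw [shift_apply, hmn] at hmem2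
          rw [nxtSet] at hmem2
          split_ifs at hmem2
          · exact Or.inl (Or.inr hmem2)
          · exact Or.inr hmem2

lemma sseq_le_hitA (hA₀ : A ⊆ St) (hA₁ : A ⊆ V₁) (hA₂ : A ⊆ V₂) (k : ℕ) (ω : ℕ → 𝕏) :
    sseq St U V₁ V₂ A k ω ≤ hitTime A ω := by
  induction k with
  | zero => exact hitTime_anti hA₀
  | succ k ih =>
    cases hs : sseq St U V₁ V₂ A k ω with
    | top =>
      rw [sseq_top hs]
      rw [hs] at ih
      exact le_trans (le_of_eq rfl) (top_le_iff.1 ih ▸ le_refl _)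
    | coe m =>
      by_cases hmem : ω m ∈ A
      · rw [sseq_succ_of_mem hs hmem, ← hs]; exact ih
      · rw [sseq_succ_of_not_mem hs hmem]
        cases ha : hitTime A ω with
        | top => exact le_top
        | coe a =>
          rw [hs, ha] at ih
          have hma : m ≤ a := by exact_mod_cast ih
          have hane : ω a ∈ A := mem_of_hitTime_eq ha
          have hmlt : m < a := lt_of_le_of_ne hma (fun hma' => hmem (hma' ▸ hane))
          have hhit : hitTime (nxtSet U V₁ V₂ (ω m)) (shift m ω) ≤ ((a - m : ℕ) : ℕ∞) := by
            refine hitTime_le (by omega) ?_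
            rw [shift_apply, show m + (a - m) = a from by omega]
            exact subset_nxtSet hA₁ hA₂ (ω m) hane
          calc (m : ℕ∞) + hitTime (nxtSet U V₁ V₂ (ω m)) (shift m ω)
              ≤ (m : ℕ∞) + ((a - m : ℕ) : ℕ∞) := add_le_add_right hhit _
            _ = (a : ℕ∞) := by
                rw [← Nat.cast_add]
                congr 1
                omega

lemma sseq_eq_hitA (hA₀ : A ⊆ St) (hA₁ : A ⊆ V₁) (hA₂ : A ⊆ V₂) {k : ℕ} {ω : ℕ → 𝕏} {n : ℕ}
    (h : sseq St U V₁ V₂ A k ω = (n : ℕ∞)) (hmem : ω n ∈ A) :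
    hitTime A ω = (n : ℕ∞) := by
  have h1 : hitTime A ω ≤ (n : ℕ∞) := by
    refine hitTime_le ?_ hmem
    have := one_le_sseq (St := St) (U := U) (V₁ := V₁) (V₂ := V₂) (A := A) k ω
    rw [h] at this
    exact_mod_cast this
  have h2 : (n : ℕ∞) ≤ hitTime A ω := h ▸ sseq_le_hitA hA₀ hA₁ hA₂ k ω
  exact le_antisymm h1 h2

lemma sseq_cases (k : ℕ) (ω : ℕ → 𝕏) :
    (∃ j ≤ k, ∃ n : ℕ, sseq St U V₁ V₂ A j ω = (n : ℕ∞) ∧ ω n ∈ A) ∨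
      ((k : ℕ∞) + 1 ≤ sseq St U V₁ V₂ A k ω) := by
  induction k with
  | zero =>
    cases hs : sseq St U V₁ V₂ A 0 ω with
    | top => right; simp [hs]
    | coe n =>
      by_cases hmem : ω n ∈ A
      · exact Or.inl ⟨0, le_rfl, n, hs, hmem⟩
      · right
        have := one_le_sseq (St := St) (U := U) (V₁ := V₁) (V₂ := V₂) (A := A) 0 ω
        rw [hs] at this
        simpa using this
  | succ k ih =>
    rcases ih with ⟨j, hj, n, hn, hmem⟩ | hk
    · exact Or.inl ⟨j, by omega, n, hn, hmem⟩
    · cases hs : sseq St U V₁ V₂ A k ω with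
      | top => right; rw [sseq_top hs]; exact le_top
      | coe n =>
        by_cases hmem : ω n ∈ A
        · exact Or.inl ⟨k, by omega, n, hs, hmem⟩
        · right
          rw [sseq_succ_of_not_mem hs hmem]
          rw [hs] at hk
          have hkn : k + 1 ≤ n := by exact_mod_cast hk
          calc ((k+1 : ℕ) : ℕ∞) + 1 ≤ (n : ℕ∞) + 1 := by
                refine add_le_add_left ?_ 1
                exact_mod_cast hkn
            _ ≤ (n : ℕ∞) + hitTime (nxtSet U V₁ V₂ (ω n)) (shift n ω) :=
                add_le_add_right hitTime_pos _
end sseqdef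

section sseqmeas
variable [m𝕏 : MeasurableSpace 𝕏]
variable {St U V₁ V₂ A : Set 𝕏}

lemma measurableSet_sseq (hSt : MeasurableSet St) (hU : MeasurableSet U)
    (hV₁ : MeasurableSet V₁) (hV₂ : MeasurableSet V₂) (hA : MeasurableSet A)
    (k : ℕ) : ∀ n : ℕ, MeasurableSet[pathSigma 𝕏 n] {ω : ℕ → 𝕏 | sseq St U V₁ V₂ A k ω = (n : ℕ∞)} := by
  induction k with
  | zero => exact fun n => measurableSet_hitTime_eq hSt n
  | succ k ih =>
    intro n
    have hset : {ω : ℕ → 𝕏 | sseq St U V₁ V₂ A (k+1) ω = (n : ℕ∞)} =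
        ({ω | sseq St U V₁ V₂ A k ω = (n : ℕ∞)} ∩ {ω | ω n ∈ A}) ∪
        ⋃ (m : ℕ), ⋃ (_ : m < n),
          ({ω | sseq St U V₁ V₂ A k ω = (m : ℕ∞)} ∩ {ω | ω m ∉ A} ∩
            (({ω | ω m ∈ U} ∩ {ω | hitTime V₁ (shift m ω) = ((n - m : ℕ) : ℕ∞)}) ∪
             ({ω | ω m ∉ U} ∩ {ω | hitTime V₂ (shift m ω) = ((n - m : ℕ) : ℕ∞)}))) := by
      ext ω
      simp only [mem_setOf_eq, mem_union, mem_inter_iff, mem_iUnion]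
      constructor
      · intro h
        cases hs : sseq St U V₁ V₂ A k ω with
        | top => rw [sseq_top hs] at h; simp at h
        | coe m =>
          by_cases hmem : ω m ∈ A
          · left
            have := sseq_succ_of_mem hs hmem
            rw [this] at h
            have hmn : m = n := by exact_mod_cast h
            subst hmn
            exact ⟨rfl, hmem⟩
          · right
            rw [sseq_succ_of_not_mem hs hmem] at h
            cases hh : hitTime (nxtSet U V₁ V₂ (ω m)) (shift m ω) with
            | top => rw [hh, add_top] at h; simp at h
            | coe j =>
              rw [hh, ← Nat.cast_add] at h
              have hmn : m + j = n := by exact_mod_cast h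
              have hj1 : 1 ≤ j := by
                have := hitTime_pos (S := nxtSet U V₁ V₂ (ω m)) (ω := shift m ω)
                rw [hh] at this
                exact_mod_cast this
              refine ⟨m, by omega, ⟨rfl, hmem⟩, ?_⟩
              by_cases hu : ω m ∈ U
              · left
                refine ⟨hu, ?_⟩
                rw [show (n - m : ℕ) = j from by omega]
                rwa [nxtSet, if_pos hu] at hh
              · right
                refine ⟨hu, ?_⟩
                rw [show (n - m : ℕ) = j from by omega]
                rwa [nxtSet, if_neg hu] at hh
      · intro h
        rcases h with ⟨hs, hmem⟩ | ⟨m, hmn, ⟨hs, hmem⟩, hrest⟩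
        · exact sseq_succ_of_mem hs hmem
        · have hx : hitTime (nxtSet U V₁ V₂ (ω m)) (shift m ω) = ((n - m : ℕ) : ℕ∞) := by
            rcases hrest with ⟨hu, hh⟩ | ⟨hu, hh⟩
            · rwa [nxtSet, if_pos hu]
            · rwa [nxtSet, if_neg hu]
          rw [sseq_succ_of_not_mem hs hmem, hx, ← Nat.cast_add,
            show m + (n - m) = n from by omega]
    rw [hset]
    refine MeasurableSet.union ((ih n).inter (measurableSet_coord le_rfl hA)) ?_
    refine MeasurableSet.iUnion fun m => MeasurableSet.iUnion fun hmn => ?_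
    have h1 : MeasurableSet[pathSigma 𝕏 n] {ω : ℕ → 𝕏 | sseq St U V₁ V₂ A k ω = (m : ℕ∞)} :=
      pathSigma_mono (le_of_lt hmn) _ (ih m)
    have h2 : MeasurableSet[pathSigma 𝕏 n] {ω : ℕ → 𝕏 | ω m ∉ A} := by
      have := (measurableSet_coord (n := n) (le_of_lt hmn) hA)
      exact this.compl
    have h3 : MeasurableSet[pathSigma 𝕏 n] {ω : ℕ → 𝕏 | hitTime V₁ (shift m ω) = ((n - m : ℕ) : ℕ∞)} := by
      have := measurableSet_hitTime_shift (𝕏 := 𝕏) hV₁ m (n - m)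
      rwa [show m + (n - m) = n from by omega] at this
    have h4 : MeasurableSet[pathSigma 𝕏 n] {ω : ℕ → 𝕏 | hitTime V₂ (shift m ω) = ((n - m : ℕ) : ℕ∞)} := by
      have := measurableSet_hitTime_shift (𝕏 := 𝕏) hV₂ m (n - m)
      rwa [show m + (n - m) = n from by omega] at this
    refine (h1.inter h2).inter (MeasurableSet.union ?_ ?_)
    · exact (measurableSet_coord (le_of_lt hmn) hU).inter h3
    · exact ((measurableSet_coord (le_of_lt hmn) hU).compl).inter h4

lemma measurableSet_sseq_pi (hSt : MeasurableSet St) (hU : MeasurableSet U)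
    (hV₁ : MeasurableSet V₁) (hV₂ : MeasurableSet V₂) (hA : MeasurableSet A)
    (k n : ℕ) : MeasurableSet {ω : ℕ → 𝕏 | sseq St U V₁ V₂ A k ω = (n : ℕ∞)} :=
  pathSigma_le_pi n _ (measurableSet_sseq hSt hU hV₁ hV₂ hA k n)

variable {δ : ℕ → ℝ} {f : 𝕏 → ℝ}

lemma measurable_payoff_sseq (hf : Measurable f) (hSt : MeasurableSet St) (hU : MeasurableSet U)
    (hV₁ : MeasurableSet V₁) (hV₂ : MeasurableSet V₂) (hA : MeasurableSet A) (k : ℕ) :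
    Measurable (payoffAt δ f (sseq St U V₁ V₂ A k)) :=
  measurable_payoffAt δ f hf (fun t => measurableSet_sseq_pi hSt hU hV₁ hV₂ hA k t)

lemma tendsto_payoff_sseq (hA₀ : A ⊆ St) (hA₁ : A ⊆ V₁) (hA₂ : A ⊆ V₂)
    {C : ℝ} (hδ_mem : ∀ k, δ k ∈ Set.Icc (0:ℝ) 1) (hδ_anti : StrictAnti δ)
    (hδ_lim : Tendsto δ atTop (𝓝 0))
    (hf_nonneg : ∀ x, 0 ≤ f x) (hf_bdd : ∀ x, f x ≤ C) (ω : ℕ → 𝕏) :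
    Tendsto (fun k => payoffAt δ f (sseq St U V₁ V₂ A k) ω) atTop
      (𝓝 (payoffAt δ f (hitTime A) ω)) := by
  cases ha : hitTime A ω with
  | coe a =>
    have hstab : ∃ j, ∃ n : ℕ, sseq St U V₁ V₂ A j ω = (n : ℕ∞) ∧ ω n ∈ A := by
      by_contra hno
      push_neg at hno
      rcases sseq_cases (St := St) (U := U) (V₁ := V₁) (V₂ := V₂) (A := A) a ω with
        ⟨j, _, n, hn, hmem⟩ | hbig
      · exact hno j n hn hmem
      · have hle := sseq_le_hitA (U := U) hA₀ hA₁ hA₂ a ω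
        rw [ha] at hle
        have hcon : (a : ℕ∞) + 1 ≤ (a : ℕ∞) := le_trans hbig hle
        have hcon2 : ((a + 1 : ℕ) : ℕ∞) ≤ ((a : ℕ) : ℕ∞) := by push_cast; exact hcon
        exact absurd (by exact_mod_cast hcon2) (Nat.not_succ_le_self a)
    obtain ⟨j, n, hn, hmem⟩ := hstab
    have hna : hitTime A ω = (n : ℕ∞) := sseq_eq_hitA hA₀ hA₁ hA₂ hn hmem
    refine tendsto_atTop_of_eventually_const (i₀ := j) fun k hk => ?_
    refine payoffAt_congr δ f ?_
    rw [sseq_stab hn hmem k hk, hna]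
  | top =>
    have hzero : payoffAt δ f (hitTime A) ω = 0 := by rw [payoffAt, if_pos ha]
    rw [hzero]
    have hnostab : ∀ j, ∀ n : ℕ, sseq St U V₁ V₂ A j ω = (n : ℕ∞) → ω n ∉ A := by
      intro j n hn hmem
      have := sseq_eq_hitA hA₀ hA₁ hA₂ hn hmem
      rw [ha] at this
      simp at this
    have hgrow : ∀ k : ℕ, ((k : ℕ∞) + 1) ≤ sseq St U V₁ V₂ A k ω := by
      intro k
      rcases sseq_cases (St := St) (U := U) (V₁ := V₁) (V₂ := V₂) (A := A) k ω with
        ⟨j, _, n, hn, hmem⟩ | h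
      · exact absurd hmem (hnostab j n hn)
      · exact h
    have hbound : ∀ k : ℕ, payoffAt δ f (sseq St U V₁ V₂ A k) ω
        ≤ ENNReal.ofReal (δ (k+1) * max C 0) := by
      intro k
      cases hs : sseq St U V₁ V₂ A k ω with
      | top => rw [payoffAt, if_pos hs]; exact zero_le
      | coe m =>
        have hkm : k + 1 ≤ m := by
          have := hgrow k
          rw [hs] at this
          exact_mod_cast this
        rw [payoffAt, if_neg (by rw [hs]; simp), hs]
        simp only [ENat.toNat_coe]
        refine ENNReal.ofReal_le_ofReal ?_
        refine mul_le_mul (hδ_anti.antitone hkm) (le_trans (hf_bdd _) (le_max_left C 0))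
          (hf_nonneg _) ?_
        exact (hδ_mem (k+1)).1
    have hb0 : Tendsto (fun k : ℕ => ENNReal.ofReal (δ (k+1) * max C 0)) atTop (𝓝 0) := by
      have h1 : Tendsto (fun k : ℕ => δ (k+1) * max C 0) atTop (𝓝 0) := by
        have := (hδ_lim.comp (tendsto_add_atTop_nat 1)).mul_const (max C 0)
        simpa using this
      have := ENNReal.tendsto_ofReal h1
      simpa using this
    exact tendsto_of_tendsto_of_tendsto_of_le_of_le tendsto_const_nhds hb0
      (fun k => zero_le) hbound
end sseqmeas

section core
variable [m𝕏 : MeasurableSpace 𝕏] [MeasurableSingletonClass 𝕏]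
variable {Pr : Kernel 𝕏 (ℕ → 𝕏)} [IsMarkovKernel Pr] {Q : Kernel 𝕏 𝕏} [IsMarkovKernel Q]
variable {δ : ℕ → ℝ} {f : 𝕏 → ℝ} {St U V₁ V₂ A : Set 𝕏}

lemma lintegral_payoffAt_eq_tsum (hf : Measurable f) {τ : (ℕ → 𝕏) → ℕ∞}
    (hτ : ∀ t : ℕ, MeasurableSet {ω' : ℕ → 𝕏 | τ ω' = (t : ℕ∞)}) (μ : Measure (ℕ → 𝕏)) :
    ∫⁻ ω, payoffAt δ f τ ω ∂μ =
      ∑' n : ℕ, ∫⁻ ω in {ω' | τ ω' = (n : ℕ∞)}, ENNReal.ofReal (δ n * f (ω n)) ∂μ := by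
  have h1 : ∫⁻ ω, payoffAt δ f τ ω ∂μ = ∫⁻ ω, ∑' n : ℕ,
      ({ω' | τ ω' = (n : ℕ∞)}).indicator (fun ω' => ENNReal.ofReal (δ n * f (ω' n))) ω ∂μ :=
    lintegral_congr fun ω => payoffAt_eq_tsum δ f τ ω
  have hmeas : ∀ n : ℕ, Measurable fun ω' : ℕ → 𝕏 => ENNReal.ofReal (δ n * f (ω' n)) :=
    fun n => (measurable_const.mul (hf.comp (measurable_pi_apply n))).ennreal_ofReal
  rw [h1, lintegral_tsum fun n => ((hmeas n).indicator (hτ n)).aemeasurable]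
  exact tsum_congr fun n => lintegral_indicator (hτ n) _

lemma core_step (hc : IsMarkovChainLaw Pr Q)
    (hδ_mem : ∀ k, δ k ∈ Set.Icc (0:ℝ) 1) (hDI : ∀ i j : ℕ, δ i * δ j ≤ δ (i + j))
    (hf_meas : Measurable f) (hf_nonneg : ∀ x, 0 ≤ f x)
    (hSt : MeasurableSet St) (hU : MeasurableSet U) (hV₁ : MeasurableSet V₁)
    (hV₂ : MeasurableSet V₂) (hA : MeasurableSet A)
    (hstep : ∀ y, y ∉ A → y ∈ St ∪ V₁ ∪ V₂ →
      ENNReal.ofReal (f y) ≤ JE δ f Pr (nxtSet U V₁ V₂ y) y)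
    (x : 𝕏) (k : ℕ) :
    ∫⁻ ω, payoffAt δ f (sseq St U V₁ V₂ A k) ω ∂ Pr x
      ≤ ∫⁻ ω, payoffAt δ f (sseq St U V₁ V₂ A (k+1)) ω ∂ Pr x := by
  have hEσ : ∀ j n : ℕ, MeasurableSet[pathSigma 𝕏 n] {ω : ℕ → 𝕏 | sseq St U V₁ V₂ A j ω = (n : ℕ∞)} :=
    fun j n => measurableSet_sseq hSt hU hV₁ hV₂ hA j n
  have hE : ∀ j n : ℕ, MeasurableSet {ω : ℕ → 𝕏 | sseq St U V₁ V₂ A j ω = (n : ℕ∞)} :=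
    fun j n => measurableSet_sseq_pi hSt hU hV₁ hV₂ hA j n
  have hpk1meas : Measurable (payoffAt δ f (sseq St U V₁ V₂ A (k+1))) :=
    measurable_payoff_sseq hf_meas hSt hU hV₁ hV₂ hA (k+1)
  -- expand LHS over the partition {sseq k = n}
  rw [lintegral_payoffAt_eq_tsum hf_meas (fun t => hE k t) (Pr x)]
  -- RHS bound from below by the same partition
  have hdisj : Pairwise (Function.onFun Disjoint
      fun n : ℕ => {ω : ℕ → 𝕏 | sseq St U V₁ V₂ A k ω = (n : ℕ∞)}) := by
    intro i j hij
    refine Set.disjoint_left.2 fun ω h1 h2 => ?_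
    rw [mem_setOf_eq] at h1 h2
    rw [h1] at h2
    exact hij (by exact_mod_cast h2)
  have hRHS : ∑' n : ℕ, ∫⁻ ω in {ω' | sseq St U V₁ V₂ A k ω' = (n : ℕ∞)},
      payoffAt δ f (sseq St U V₁ V₂ A (k+1)) ω ∂ Pr x
      ≤ ∫⁻ ω, payoffAt δ f (sseq St U V₁ V₂ A (k+1)) ω ∂ Pr x := by
    rw [← lintegral_iUnion (fun n => hE k n) hdisj]
    exact lintegral_mono' Measure.restrict_le_self le_rfl
  refine le_trans (ENNReal.tsum_le_tsum fun n => ?_) hRHS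
  -- termwise over n
  set En := {ω' : ℕ → 𝕏 | sseq St U V₁ V₂ A k ω' = (n : ℕ∞)} with hEn
  set EA := En ∩ {ω : ℕ → 𝕏 | ω n ∈ A} with hEA
  set E1 := (En ∩ {ω : ℕ → 𝕏 | ω n ∉ A}) ∩ {ω : ℕ → 𝕏 | ω n ∈ U} with hE1
  set E2 := (En ∩ {ω : ℕ → 𝕏 | ω n ∉ A}) ∩ {ω : ℕ → 𝕏 | ω n ∉ U} with hE2
  have hcoordA : MeasurableSet {ω : ℕ → 𝕏 | ω n ∈ A} := measurable_pi_apply n hA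
  have hcoordU : MeasurableSet {ω : ℕ → 𝕏 | ω n ∈ U} := measurable_pi_apply n hU
  have hEAm : MeasurableSet EA := (hE k n).inter hcoordA
  have hE1m : MeasurableSet E1 := ((hE k n).inter hcoordA.compl).inter hcoordU
  have hE2m : MeasurableSet E2 := ((hE k n).inter hcoordA.compl).inter hcoordU.compl
  have hsplit : En = EA ∪ (E1 ∪ E2) := by
    rw [hEA, hE1, hE2]
    ext ω
    by_cases h1 : ω ∈ En <;> by_cases h2 : ω n ∈ A <;> by_cases h3 : ω n ∈ U <;>
      simp [h1, h2, h3]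
  have hd1 : Disjoint EA (E1 ∪ E2) := by
    refine Set.disjoint_left.2 fun ω hω1 hω2 => ?_
    rcases hω2 with h | h
    · exact h.1.2 hω1.2
    · exact h.1.2 hω1.2
  have hd2 : Disjoint E1 E2 := by
    refine Set.disjoint_left.2 fun ω hω1 hω2 => hω2.2 hω1.2
  -- both sides split into three pieces
  have hLsplit : ∀ g : (ℕ → 𝕏) → ℝ≥0∞,
      ∫⁻ ω in En, g ω ∂ Pr x = ∫⁻ ω in EA, g ω ∂ Pr x +
        (∫⁻ ω in E1, g ω ∂ Pr x + ∫⁻ ω in E2, g ω ∂ Pr x) := by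
    intro g
    rw [hsplit, lintegral_union (hE1m.union hE2m) hd1, lintegral_union hE2m hd2]
  rw [hLsplit, hLsplit]
  have hfin_ne : ((n : ℕ∞) : ℕ∞) ≠ ⊤ := by simp
  -- piece EA : equality
  have hEAeq : ∫⁻ ω in EA, ENNReal.ofReal (δ n * f (ω n)) ∂ Pr x
      = ∫⁻ ω in EA, payoffAt δ f (sseq St U V₁ V₂ A (k+1)) ω ∂ Pr x := by
    refine setLIntegral_congr_fun hEAm (fun ω hω => ?_)
    obtain ⟨hσ, hmem⟩ := hω
    rw [mem_setOf_eq] at hσ hmem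
    rw [payoffAt_of_eq_coe δ f (sseq_succ_of_mem hσ hmem)]
  rw [hEAeq]
  refine add_le_add_right (add_le_add ?_ ?_) _
  -- the two continuation pieces; we do them uniformly
  · -- E1 : target V₁
    calc ∫⁻ ω in E1, ENNReal.ofReal (δ n * f (ω n)) ∂ Pr x
        ≤ ∫⁻ ω in E1, ENNReal.ofReal (δ n) * JE δ f Pr V₁ (ω n) ∂ Pr x := by
          refine lintegral_mono_ae ((ae_restrict_iff' hE1m).2 (ae_of_all _ fun ω hω => ?_))
          obtain ⟨⟨hσ, hnA⟩, hnU⟩ := hω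
          rw [mem_setOf_eq] at hσ hnA hnU
          have hst : ω n ∈ St ∪ V₁ ∪ V₂ := sseq_state hσ
          have := hstep (ω n) hnA hst
          rw [nxtSet, if_pos hnU] at this
          rw [ENNReal.ofReal_mul (hδ_mem n).1]
          exact mul_le_mul_right this _
      _ = ENNReal.ofReal (δ n) * ∫⁻ ω in E1, JE δ f Pr V₁ (ω n) ∂ Pr x :=
          lintegral_const_mul _ ((measurable_JE Pr hf_meas hV₁).comp (measurable_pi_apply n))
      _ = ENNReal.ofReal (δ n) * ∫⁻ ω in E1, payoffAt δ f (hitTime V₁) (shift n ω) ∂ Pr x := by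
          congr 1
          exact (markov_shift_fun hc n x
            (((hEσ k n).inter (measurableSet_coord le_rfl hA).compl).inter
              (measurableSet_coord le_rfl hU))
            (measurable_payoff_hit hf_meas hV₁)).symm
      _ = ∫⁻ ω in E1, ENNReal.ofReal (δ n) * payoffAt δ f (hitTime V₁) (shift n ω) ∂ Pr x :=
          (lintegral_const_mul _ ((measurable_payoff_hit hf_meas hV₁).comp
            (measurable_shift n))).symm
      _ ≤ ∫⁻ ω in E1, payoffAt δ f (sseq St U V₁ V₂ A (k+1)) ω ∂ Pr x := by
          refine lintegral_mono_ae ((ae_restrict_iff' hE1m).2 (ae_of_all _ fun ω hω => ?_))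
          obtain ⟨⟨hσ, hnA⟩, hnU⟩ := hω
          rw [mem_setOf_eq] at hσ hnA hnU
          cases hh : hitTime V₁ (shift n ω) with
          | top =>
            rw [payoffAt_of_eq_top δ f hh, mul_zero]
            exact zero_le
          | coe j =>
            have h1 : sseq St U V₁ V₂ A (k+1) ω = ((n + j : ℕ) : ℕ∞) := by
              rw [sseq_succ_of_not_mem hσ hnA, nxtSet, if_pos hnU, hh, ← Nat.cast_add]
            have hL := payoffAt_of_eq_coe δ f hh
            have hR := payoffAt_of_eq_coe δ f h1
            rw [hL, hR, shift_apply, ← ENNReal.ofReal_mul (hδ_mem n).1]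
            refine ENNReal.ofReal_le_ofReal ?_
            rw [← mul_assoc]
            exact mul_le_mul_of_nonneg_right (hDI n j) (hf_nonneg _)
  · -- E2 : target V₂
    calc ∫⁻ ω in E2, ENNReal.ofReal (δ n * f (ω n)) ∂ Pr x
        ≤ ∫⁻ ω in E2, ENNReal.ofReal (δ n) * JE δ f Pr V₂ (ω n) ∂ Pr x := by
          refine lintegral_mono_ae ((ae_restrict_iff' hE2m).2 (ae_of_all _ fun ω hω => ?_))
          obtain ⟨⟨hσ, hnA⟩, hnU⟩ := hω
          rw [mem_setOf_eq] at hσ hnA hnU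
          have hst : ω n ∈ St ∪ V₁ ∪ V₂ := sseq_state hσ
          have := hstep (ω n) hnA hst
          rw [nxtSet, if_neg hnU] at this
          rw [ENNReal.ofReal_mul (hδ_mem n).1]
          exact mul_le_mul_right this _
      _ = ENNReal.ofReal (δ n) * ∫⁻ ω in E2, JE δ f Pr V₂ (ω n) ∂ Pr x :=
          lintegral_const_mul _ ((measurable_JE Pr hf_meas hV₂).comp (measurable_pi_apply n))
      _ = ENNReal.ofReal (δ n) * ∫⁻ ω in E2, payoffAt δ f (hitTime V₂) (shift n ω) ∂ Pr x := by
          congr 1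
          exact (markov_shift_fun hc n x
            (((hEσ k n).inter (measurableSet_coord le_rfl hA).compl).inter
              (measurableSet_coord le_rfl hU).compl)
            (measurable_payoff_hit hf_meas hV₂)).symm
      _ = ∫⁻ ω in E2, ENNReal.ofReal (δ n) * payoffAt δ f (hitTime V₂) (shift n ω) ∂ Pr x :=
          (lintegral_const_mul _ ((measurable_payoff_hit hf_meas hV₂).comp
            (measurable_shift n))).symm
      _ ≤ ∫⁻ ω in E2, payoffAt δ f (sseq St U V₁ V₂ A (k+1)) ω ∂ Pr x := by
          refine lintegral_mono_ae ((ae_restrict_iff' hE2m).2 (ae_of_all _ fun ω hω => ?_))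
          obtain ⟨⟨hσ, hnA⟩, hnU⟩ := hω
          rw [mem_setOf_eq] at hσ hnA hnU
          cases hh : hitTime V₂ (shift n ω) with
          | top =>
            rw [payoffAt_of_eq_top δ f hh, mul_zero]
            exact zero_le
          | coe j =>
            have h1 : sseq St U V₁ V₂ A (k+1) ω = ((n + j : ℕ) : ℕ∞) := by
              rw [sseq_succ_of_not_mem hσ hnA, nxtSet, if_neg hnU, hh, ← Nat.cast_add]
            have hL := payoffAt_of_eq_coe δ f hh
            have hR := payoffAt_of_eq_coe δ f h1
            rw [hL, hR, shift_apply, ← ENNReal.ofReal_mul (hδ_mem n).1]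
            refine ENNReal.ofReal_le_ofReal ?_
            rw [← mul_assoc]
            exact mul_le_mul_of_nonneg_right (hDI n j) (hf_nonneg _)

/-- the key comparison lemma: waiting from `St` to the absorbing set `A` improves the value -/
lemma JE_le_JE (hc : IsMarkovChainLaw Pr Q)
    {C : ℝ} (hδ_mem : ∀ k, δ k ∈ Set.Icc (0:ℝ) 1) (hδ_anti : StrictAnti δ)
    (hδ_lim : Tendsto δ atTop (𝓝 0)) (hDI : ∀ i j : ℕ, δ i * δ j ≤ δ (i + j))
    (hf_meas : Measurable f) (hf_nonneg : ∀ x, 0 ≤ f x) (hf_bdd : ∀ x, f x ≤ C)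
    (hSt : MeasurableSet St) (hU : MeasurableSet U) (hV₁ : MeasurableSet V₁)
    (hV₂ : MeasurableSet V₂) (hA : MeasurableSet A)
    (hA₀ : A ⊆ St) (hA₁ : A ⊆ V₁) (hA₂ : A ⊆ V₂)
    (hstep : ∀ y, y ∉ A → y ∈ St ∪ V₁ ∪ V₂ →
      ENNReal.ofReal (f y) ≤ JE δ f Pr (nxtSet U V₁ V₂ y) y)
    (x : 𝕏) : JE δ f Pr St x ≤ JE δ f Pr A x := by
  have hf_bdd' : ∀ y, f y ≤ max C 0 := fun y => le_trans (hf_bdd y) (le_max_left C 0)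
  have h0 : JE δ f Pr St x = ∫⁻ ω, payoffAt δ f (sseq St U V₁ V₂ A 0) ω ∂ Pr x :=
    lintegral_congr fun ω => payoffAt_congr δ f (sseq_zero ω).symm
  have hmono : ∀ k, JE δ f Pr St x ≤ ∫⁻ ω, payoffAt δ f (sseq St U V₁ V₂ A k) ω ∂ Pr x := by
    intro k
    induction k with
    | zero => exact le_of_eq h0
    | succ k ih =>
      exact le_trans ih (core_step hc hδ_mem hDI hf_meas hf_nonneg hSt hU hV₁ hV₂ hA hstep x k)
  have hlim : Tendsto (fun k => ∫⁻ ω, payoffAt δ f (sseq St U V₁ V₂ A k) ω ∂ Pr x) atTop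
      (𝓝 (JE δ f Pr A x)) := by
    refine tendsto_lintegral_of_dominated_convergence (fun _ => ENNReal.ofReal (max C 0))
      (fun k => measurable_payoff_sseq hf_meas hSt hU hV₁ hV₂ hA k)
      (fun k => ae_of_all _ fun ω => payoffAt_le δ f hδ_mem hf_nonneg hf_bdd' _ ω) ?_
      (ae_of_all _ fun ω => tendsto_payoff_sseq hA₀ hA₁ hA₂ hδ_mem hδ_anti hδ_lim
        hf_nonneg hf_bdd' ω)
    simp
  exact ge_of_tendsto' hlim hmono
end core

section bridge
variable [m𝕏 : MeasurableSpace 𝕏]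
variable {Pr : Kernel 𝕏 (ℕ → 𝕏)} [IsMarkovKernel Pr]
variable {δ : ℕ → ℝ} {f : 𝕏 → ℝ} {C : ℝ}

lemma stopPayoff_eq (hδ_mem : ∀ k, δ k ∈ Set.Icc (0:ℝ) 1) (hf_nonneg : ∀ x, 0 ≤ f x)
    (V : Set 𝕏) (ω : ℕ → 𝕏) :
    stopPayoff δ f V ω = (payoffAt δ f (hitTime V) ω).toReal := by
  cases h : hitTime V ω with
  | top => rw [stopPayoff, if_pos h, payoffAt_of_eq_top δ f h]; simp
  | coe t =>
    rw [stopPayoff, if_neg (by rw [h]; simp), h, payoffAt_of_eq_coe δ f h,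
      ENNReal.toReal_ofReal (mul_nonneg (hδ_mem _).1 (hf_nonneg _))]
    simp

lemma valJ_eq (hδ_mem : ∀ k, δ k ∈ Set.Icc (0:ℝ) 1) (hf_meas : Measurable f)
    (hf_nonneg : ∀ x, 0 ≤ f x) {V : Set 𝕏} (hV : MeasurableSet V) (x : 𝕏) :
    valJ Pr δ f V x = (JE δ f Pr V x).toReal := by
  rw [valJ, JE]
  rw [show (fun ω => stopPayoff δ f V ω) = fun ω => (payoffAt δ f (hitTime V) ω).toReal from
    funext fun ω => stopPayoff_eq hδ_mem hf_nonneg V ω]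
  exact integral_toReal (measurable_payoff_hit hf_meas hV).aemeasurable
    (ae_of_all _ fun ω => by
      rw [payoffAt]
      split_ifs
      · exact ENNReal.zero_lt_top
      · exact ENNReal.ofReal_lt_top)

lemma valJ_mono (hδ_mem : ∀ k, δ k ∈ Set.Icc (0:ℝ) 1) (hf_meas : Measurable f)
    (hf_nonneg : ∀ x, 0 ≤ f x) (hf_bdd : ∀ x, f x ≤ C)
    {V V' : Set 𝕏} (hV : MeasurableSet V) (hV' : MeasurableSet V') {x : 𝕏}
    (h : JE δ f Pr V x ≤ JE δ f Pr V' x) : valJ Pr δ f V x ≤ valJ Pr δ f V' x := by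
  rw [valJ_eq hδ_mem hf_meas hf_nonneg hV, valJ_eq hδ_mem hf_meas hf_nonneg hV']
  exact ENNReal.toReal_mono (JE_ne_top Pr hδ_mem hf_nonneg hf_bdd V' x) h

lemma ofReal_f_le_JE (hδ_mem : ∀ k, δ k ∈ Set.Icc (0:ℝ) 1) (hf_meas : Measurable f)
    (hf_nonneg : ∀ x, 0 ≤ f x) {V : Set 𝕏} (hV : MeasurableSet V) {y : 𝕏}
    (h : f y ≤ valJ Pr δ f V y) : ENNReal.ofReal (f y) ≤ JE δ f Pr V y := by
  rw [valJ_eq hδ_mem hf_meas hf_nonneg hV] at h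
  exact ENNReal.ofReal_le_of_le_toReal h

lemma measurable_valJ (hδ_mem : ∀ k, δ k ∈ Set.Icc (0:ℝ) 1) (hf_meas : Measurable f)
    (hf_nonneg : ∀ x, 0 ≤ f x) {V : Set 𝕏} (hV : MeasurableSet V) :
    Measurable (valJ Pr δ f V) := by
  rw [show valJ Pr δ f V = fun x => (JE δ f Pr V x).toReal from
    funext fun x => valJ_eq hδ_mem hf_meas hf_nonneg hV x]
  exact (measurable_JE Pr hf_meas hV).ennreal_toReal

lemma measurableSet_Θ (hδ_mem : ∀ k, δ k ∈ Set.Icc (0:ℝ) 1) (hf_meas : Measurable f)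
    (hf_nonneg : ∀ x, 0 ≤ f x) {V : Set 𝕏} (hV : MeasurableSet V) :
    MeasurableSet (Θ Pr δ f V) :=
  measurableSet_le (measurable_valJ hδ_mem hf_meas hf_nonneg hV) hf_meas
end bridge

section interlimit
variable [m𝕏 : MeasurableSpace 𝕏]
variable {Pr : Kernel 𝕏 (ℕ → 𝕏)} [IsMarkovKernel Pr]
variable {δ : ℕ → ℝ} {f : 𝕏 → ℝ} {C : ℝ} {R : ℕ → Set 𝕏}

lemma R_antitone (hdec : ∀ n, R (n+1) ⊆ R n) : ∀ {n m : ℕ}, n ≤ m → R m ⊆ R n := by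
  intro n m h
  induction m with
  | zero => rw [Nat.le_zero.1 h]
  | succ m ih =>
    rcases Nat.lt_or_ge n (m+1) with h1 | h2
    · exact le_trans (hdec m) (ih (by omega))
    · rw [show n = m + 1 from by omega]

/-- stabilization of bounded increasing hitting times of a decreasing family -/
lemma hit_stab (hdec : ∀ n, R (n+1) ⊆ R n) {ω : ℕ → 𝕏} {a : ℕ}
    (hbd : ∀ n, hitTime (R n) ω ≤ ((a : ℕ) : ℕ∞)) :
    ∃ (N t0 : ℕ), ω t0 ∈ (⋂ n, R n) ∧ 1 ≤ t0 ∧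
      ∀ n, N ≤ n → hitTime (R n) ω = (t0 : ℕ∞) := by
  have hne : ∀ n, hitTime (R n) ω ≠ ⊤ := fun n => ne_top_of_le_ne_top (by simp) (hbd n)
  set t : ℕ → ℕ := fun n => (hitTime (R n) ω).toNat with ht
  have hcoe : ∀ n, hitTime (R n) ω = ((t n : ℕ) : ℕ∞) := fun n => (ENat.coe_toNat (hne n)).symm
  have hmon : Monotone t := by
    intro n m hnm
    have := hitTime_anti (R_antitone hdec hnm) (ω := ω)
    rw [hcoe n, hcoe m] at this
    exact_mod_cast this
  have hbdt : ∀ n, t n ≤ a := by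
    intro n
    have := hbd n
    rw [hcoe n] at this
    exact_mod_cast this
  have hbddAbove : BddAbove (Set.range t) := ⟨a, by rintro _ ⟨n, rfl⟩; exact hbdt n⟩
  have hnonempty : (Set.range t).Nonempty := ⟨t 0, 0, rfl⟩
  obtain ⟨N, hN⟩ := Nat.sSup_mem hnonempty hbddAbove
  have hstab : ∀ n, N ≤ n → t n = t N := by
    intro n hn
    refine le_antisymm ?_ (hmon hn)
    rw [hN]
    exact le_csSup hbddAbove ⟨n, rfl⟩
  refine ⟨N, t N, ?_, ?_, fun n hn => by rw [hcoe n, hstab n hn]⟩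
  · refine mem_iInter.2 fun k => ?_
    have h1 : ω (t (max k N)) ∈ R (max k N) := by
      have := mem_of_hitTime_eq (hcoe (max k N))
      exact this
    rw [hstab (max k N) (le_max_right k N)] at h1
    exact R_antitone hdec (le_max_left k N) h1
  · have := hitTime_pos (S := R N) (ω := ω)
    rw [hcoe N] at this
    exact_mod_cast this

lemma tendsto_payoff_iInter (hdec : ∀ n, R (n+1) ⊆ R n)
    (hδ_mem : ∀ k, δ k ∈ Set.Icc (0:ℝ) 1) (hδ_anti : StrictAnti δ)
    (hδ_lim : Tendsto δ atTop (𝓝 0)) (hf_nonneg : ∀ x, 0 ≤ f x) (hf_bdd : ∀ x, f x ≤ C)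
    (ω : ℕ → 𝕏) :
    Tendsto (fun n => payoffAt δ f (hitTime (R n)) ω) atTop
      (𝓝 (payoffAt δ f (hitTime (⋂ n, R n)) ω)) := by
  have hIle : ∀ n, hitTime (R n) ω ≤ hitTime (⋂ k, R k) ω :=
    fun n => hitTime_anti (iInter_subset R n)
  cases hi : hitTime (⋂ n, R n) ω with
  | coe a =>
    have hbd : ∀ n, hitTime (R n) ω ≤ ((a : ℕ) : ℕ∞) := fun n => hi ▸ hIle n
    obtain ⟨N, t0, hmem, ht01, hstab⟩ := hit_stab hdec hbd
    have hta : hitTime (⋂ n, R n) ω = (t0 : ℕ∞) := by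
      have h1 : hitTime (⋂ n, R n) ω ≤ (t0 : ℕ∞) := hitTime_le ht01 hmem
      have h2 : (t0 : ℕ∞) ≤ hitTime (⋂ n, R n) ω := (hstab N le_rfl) ▸ hIle N
      exact le_antisymm h1 h2
    refine tendsto_atTop_of_eventually_const (i₀ := N) fun n hn => ?_
    refine payoffAt_congr δ f ?_
    rw [hstab n hn, hta]
  | top =>
    rw [payoffAt_of_eq_top δ f hi]
    rw [ENNReal.tendsto_atTop_zero]
    intro ε hε
    have hb : Tendsto (fun m : ℕ => ENNReal.ofReal (δ m * C)) atTop (𝓝 0) := by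
      have h1 : Tendsto (fun m : ℕ => δ m * C) atTop (𝓝 0) := by
        have := hδ_lim.mul_const C
        simpa using this
      have := ENNReal.tendsto_ofReal h1
      simpa using this
    obtain ⟨M, hM⟩ := (hb.eventually (gt_mem_nhds hε)).exists
    by_cases hcase : ∃ N, ((M : ℕ) : ℕ∞) ≤ hitTime (R N) ω
    · obtain ⟨N, hN⟩ := hcase
      refine ⟨N, fun n hn => ?_⟩
      have hmon : hitTime (R N) ω ≤ hitTime (R n) ω := hitTime_anti (R_antitone hdec hn)
      cases hh : hitTime (R n) ω with
      | top => rw [payoffAt_of_eq_top δ f hh]; exact zero_le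
      | coe m =>
        have hMm : M ≤ m := by
          have := le_trans hN hmon
          rw [hh] at this
          exact_mod_cast this
        rw [payoffAt_of_eq_coe δ f hh]
        refine le_trans ?_ (le_of_lt hM)
        refine ENNReal.ofReal_le_ofReal ?_
        exact mul_le_mul (hδ_anti.antitone hMm) (hf_bdd _) (hf_nonneg _) (hδ_mem M).1
    · push_neg at hcase
      exfalso
      have hbd : ∀ n, hitTime (R n) ω ≤ ((M : ℕ) : ℕ∞) := fun n => le_of_lt (hcase n)
      obtain ⟨N, t0, hmem, ht01, -⟩ := hit_stab hdec hbd
      have := hitTime_le ht01 hmem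
      rw [hi] at this
      exact absurd (top_le_iff.1 this) (by simp)

lemma tendsto_JE_iInter (hmeasR : ∀ n, MeasurableSet (R n)) (hdec : ∀ n, R (n+1) ⊆ R n)
    (hδ_mem : ∀ k, δ k ∈ Set.Icc (0:ℝ) 1) (hδ_anti : StrictAnti δ)
    (hδ_lim : Tendsto δ atTop (𝓝 0)) (hf_meas : Measurable f)
    (hf_nonneg : ∀ x, 0 ≤ f x) (hf_bdd : ∀ x, f x ≤ C) (x : 𝕏) :
    Tendsto (fun n => JE δ f Pr (R n) x) atTop (𝓝 (JE δ f Pr (⋂ n, R n) x)) := by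
  refine tendsto_lintegral_of_dominated_convergence (fun _ => ENNReal.ofReal C)
    (fun n => measurable_payoff_hit hf_meas (hmeasR n))
    (fun n => ae_of_all _ fun ω => payoffAt_le δ f hδ_mem hf_nonneg hf_bdd _ ω) (by simp)
    (ae_of_all _ fun ω => tendsto_payoff_iInter hdec hδ_mem hδ_anti hδ_lim
      hf_nonneg hf_bdd ω)
end interlimit





end TIE

open TIE

/-- Under decreasing impatience, for any two equilibria `S, T`, the set
`(S∩T)_∞ = ⋂_{n ≥ 1} Θⁿ(S∩T)` is an equilibrium and dominates both `S` and `T` in value. -/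
theorem intersection_limit_equilibrium
    {𝕏 : Type*} [TopologicalSpace 𝕏] [PolishSpace 𝕏] [MeasurableSpace 𝕏] [BorelSpace 𝕏]
    (Pr : Kernel 𝕏 (ℕ → 𝕏)) [IsMarkovKernel Pr] (Q : Kernel 𝕏 𝕏) [IsMarkovKernel Q]
    (hchain : IsMarkovChainLaw Pr Q)
    (f : 𝕏 → ℝ) (hf_meas : Measurable f) (hf_nonneg : ∀ x, 0 ≤ f x)
    (hf_bdd : ∃ C : ℝ, ∀ x, f x ≤ C)
    (δ : ℕ → ℝ) (hδ_mem : ∀ k, δ k ∈ Set.Icc (0 : ℝ) 1) (hδ_anti : StrictAnti δ)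
    (hδ_zero : δ 0 = 1) (hδ_lim : Tendsto δ atTop (𝓝 0))
    (hDI : ∀ i j : ℕ, δ i * δ j ≤ δ (i + j))
    (S T : Set 𝕏) (hS : IsEquilibrium Pr δ f S) (hT : IsEquilibrium Pr δ f T) :
    IsEquilibrium Pr δ f (⋂ n : ℕ, (Θ Pr δ f)^[n + 1] (S ∩ T)) ∧
    ∀ x : 𝕏, max (valV Pr δ f S x) (valV Pr δ f T x) ≤
      valV Pr δ f (⋂ n : ℕ, (Θ Pr δ f)^[n + 1] (S ∩ T)) x := by
  classical
  haveI : MeasurableSingletonClass 𝕏 := inferInstance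
  obtain ⟨C, hf_bdd⟩ := hf_bdd
  obtain ⟨hSmeas, hSeq⟩ := hS
  obtain ⟨hTmeas, hTeq⟩ := hT
  have hST : MeasurableSet (S ∩ T) := hSmeas.inter hTmeas
  have hnotΘ : ∀ {V : Set 𝕏}, MeasurableSet V → ∀ {y : 𝕏}, y ∉ Θ Pr δ f V →
      ENNReal.ofReal (f y) ≤ TIE.JE δ f Pr V y := by
    intro V hV y hy
    refine ofReal_f_le_JE hδ_mem hf_meas hf_nonneg hV (le_of_lt ?_)
    exact not_le.1 hy
  -- S and T are dominated by S ∩ T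
  have hJS : ∀ x, TIE.JE δ f Pr S x ≤ TIE.JE δ f Pr (S ∩ T) x := by
    intro x
    refine JE_le_JE (St := S) (U := S) (V₁ := T) (V₂ := S) (A := S ∩ T) hchain hδ_mem
      hδ_anti hδ_lim hDI hf_meas hf_nonneg hf_bdd hSmeas hSmeas hTmeas hSmeas hST
      inter_subset_left inter_subset_right inter_subset_left ?_ x
    intro y hyA _
    rw [nxtSet]
    split_ifs with hyU
    · have hyT : y ∉ T := fun hT' => hyA ⟨hyU, hT'⟩
      rw [← hTeq] at hyT
      exact hnotΘ hTmeas hyT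
    · have hyS : y ∉ S := hyU
      rw [← hSeq] at hyS
      exact hnotΘ hSmeas hyS
  have hJT : ∀ x, TIE.JE δ f Pr T x ≤ TIE.JE δ f Pr (S ∩ T) x := by
    intro x
    refine JE_le_JE (St := T) (U := T) (V₁ := S) (V₂ := T) (A := S ∩ T) hchain hδ_mem
      hδ_anti hδ_lim hDI hf_meas hf_nonneg hf_bdd hTmeas hTmeas hSmeas hTmeas hST
      inter_subset_right inter_subset_left inter_subset_right ?_ x
    intro y hyA hyM
    rw [nxtSet]
    split_ifs with hyU
    · have hyS : y ∉ S := fun hS' => hyA ⟨hS', hyU⟩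
      rw [← hSeq] at hyS
      exact hnotΘ hSmeas hyS
    · have hyT : y ∉ T := hyU
      rw [← hTeq] at hyT
      exact hnotΘ hTmeas hyT
  -- the key one-set improvement
  have hkey : ∀ (R : Set 𝕏), MeasurableSet R → Θ Pr δ f R ⊆ R →
      ∀ x, TIE.JE δ f Pr R x ≤ TIE.JE δ f Pr (Θ Pr δ f R) x := by
    intro R hR hΘR x
    refine JE_le_JE (St := R) (U := Set.univ) (V₁ := R) (V₂ := R) (A := Θ Pr δ f R) hchain
      hδ_mem hδ_anti hδ_lim hDI hf_meas hf_nonneg hf_bdd hR MeasurableSet.univ hR hR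
      (measurableSet_Θ hδ_mem hf_meas hf_nonneg hR) hΘR hΘR hΘR ?_ x
    intro y hyA _
    rw [nxtSet, if_pos (mem_univ y)]
    exact hnotΘ hR hyA
  have hvalJ_mono : ∀ {V V' : Set 𝕏}, MeasurableSet V → MeasurableSet V' →
      (∀ x, TIE.JE δ f Pr V x ≤ TIE.JE δ f Pr V' x) →
      ∀ x, valJ Pr δ f V x ≤ valJ Pr δ f V' x :=
    fun hV hV' h x => valJ_mono hδ_mem hf_meas hf_nonneg hf_bdd hV hV' (h x)
  have hΘmono : ∀ {V V' : Set 𝕏}, MeasurableSet V → MeasurableSet V' →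
      (∀ x, TIE.JE δ f Pr V x ≤ TIE.JE δ f Pr V' x) → Θ Pr δ f V' ⊆ Θ Pr δ f V := by
    intro V V' hV hV' h x hx
    exact le_trans (hvalJ_mono hV hV' h x) hx
  have hΘ0 : Θ Pr δ f (S ∩ T) ⊆ S ∩ T := by
    intro x hx
    constructor
    · have : x ∈ Θ Pr δ f S := le_trans (hvalJ_mono hSmeas hST hJS x) hx
      rwa [hSeq] at this
    · have : x ∈ Θ Pr δ f T := le_trans (hvalJ_mono hTmeas hST hJT x) hx
      rwa [hTeq] at this
  -- the iterated sequence
  set Rs : ℕ → Set 𝕏 := fun n => (Θ Pr δ f)^[n + 1] (S ∩ T) with hRsdef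
  have hRs0 : Rs 0 = Θ Pr δ f (S ∩ T) := by
    show (Θ Pr δ f)^[0 + 1] (S ∩ T) = Θ Pr δ f (S ∩ T)
    rw [Function.iterate_one]
  have hRsS : ∀ n, Rs (n+1) = Θ Pr δ f (Rs n) := by
    intro n
    show (Θ Pr δ f)^[n + 1 + 1] (S ∩ T) = Θ Pr δ f ((Θ Pr δ f)^[n + 1] (S ∩ T))
    exact Function.iterate_succ_apply' (Θ Pr δ f) (n+1) (S ∩ T)
  have hpack : ∀ n, MeasurableSet (Rs n) ∧ Θ Pr δ f (Rs n) ⊆ Rs n ∧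
      (∀ x, TIE.JE δ f Pr (Rs n) x ≤ TIE.JE δ f Pr (Rs (n+1)) x) := by
    intro n
    induction n with
    | zero =>
      have hm : MeasurableSet (Rs 0) := by
        rw [hRs0]; exact measurableSet_Θ hδ_mem hf_meas hf_nonneg hST
      have hJ0 : ∀ x, TIE.JE δ f Pr (S ∩ T) x ≤ TIE.JE δ f Pr (Rs 0) x := by
        intro x; rw [hRs0]; exact hkey (S ∩ T) hST hΘ0 x
      have hsub : Θ Pr δ f (Rs 0) ⊆ Rs 0 := by
        have := hΘmono hST hm hJ0
        rwa [hRs0] at this ⊢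
      have hJn : ∀ x, TIE.JE δ f Pr (Rs 0) x ≤ TIE.JE δ f Pr (Rs 1) x := by
        intro x; rw [hRsS 0]; exact hkey (Rs 0) hm hsub x
      exact ⟨hm, hsub, hJn⟩
    | succ n ih =>
      obtain ⟨hm, hsub, hJ⟩ := ih
      have hm' : MeasurableSet (Rs (n+1)) := by
        rw [hRsS n]; exact measurableSet_Θ hδ_mem hf_meas hf_nonneg hm
      have hsub' : Θ Pr δ f (Rs (n+1)) ⊆ Rs (n+1) := by
        have h4 := hΘmono hm hm' hJ
        rwa [← hRsS n] at h4
      have hJ' : ∀ x, TIE.JE δ f Pr (Rs (n+1)) x ≤ TIE.JE δ f Pr (Rs (n+1+1)) x := by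
        intro x; rw [hRsS (n+1)]; exact hkey (Rs (n+1)) hm' hsub' x
      exact ⟨hm', hsub', hJ'⟩
  have hmeasRs : ∀ n, MeasurableSet (Rs n) := fun n => (hpack n).1
  have hdecRs : ∀ n, Rs (n+1) ⊆ Rs n := fun n => by
    rw [hRsS n]; exact (hpack n).2.1
  have hJchain : ∀ n m, n ≤ m → ∀ x, TIE.JE δ f Pr (Rs n) x ≤ TIE.JE δ f Pr (Rs m) x := by
    intro n m hnm x
    induction m with
    | zero => rw [Nat.le_zero.1 hnm]
    | succ m ih =>
      rcases Nat.lt_or_ge n (m+1) with h1 | h2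
      · exact le_trans (ih (by omega)) ((hpack m).2.2 x)
      · rw [show n = m + 1 from by omega]
  have hR₁meas : MeasurableSet (⋂ n, Rs n) := MeasurableSet.iInter hmeasRs
  have hlim : ∀ x, Tendsto (fun n => TIE.JE δ f Pr (Rs n) x) atTop
      (𝓝 (TIE.JE δ f Pr (⋂ n, Rs n) x)) :=
    fun x => tendsto_JE_iInter hmeasRs hdecRs hδ_mem hδ_anti hδ_lim hf_meas
      hf_nonneg hf_bdd x
  have hJle : ∀ n x, TIE.JE δ f Pr (Rs n) x ≤ TIE.JE δ f Pr (⋂ n, Rs n) x := by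
    intro n x
    refine ge_of_tendsto (hlim x) ?_
    exact eventually_atTop.2 ⟨n, fun m hm => hJchain n m hm x⟩
  have hJST : ∀ x, TIE.JE δ f Pr (S ∩ T) x ≤ TIE.JE δ f Pr (⋂ n, Rs n) x := by
    intro x
    refine le_trans ?_ (hJle 0 x)
    rw [hRs0]
    exact hkey (S ∩ T) hST hΘ0 x
  have hJSfin : ∀ x, TIE.JE δ f Pr S x ≤ TIE.JE δ f Pr (⋂ n, Rs n) x :=
    fun x => le_trans (hJS x) (hJST x)
  have hJTfin : ∀ x, TIE.JE δ f Pr T x ≤ TIE.JE δ f Pr (⋂ n, Rs n) x :=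
    fun x => le_trans (hJT x) (hJST x)
  have hgoalset : (⋂ n : ℕ, (Θ Pr δ f)^[n + 1] (S ∩ T)) = ⋂ n, Rs n := rfl
  rw [hgoalset]
  refine ⟨⟨hR₁meas, ?_⟩, ?_⟩
  · -- Θ fixed point
    refine Set.Subset.antisymm ?_ ?_
    · intro x hx
      refine mem_iInter.2 fun n => ?_
      cases n with
      | zero =>
        rw [hRs0]
        exact le_trans (hvalJ_mono hST hR₁meas hJST x) hx
      | succ n =>
        rw [hRsS n]
        exact le_trans (hvalJ_mono (hmeasRs n) hR₁meas (fun y => hJle n y) x) hx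
    · intro x hx
      have hxn : ∀ n, valJ Pr δ f (Rs n) x ≤ f x := by
        intro n
        have h1 := mem_iInter.1 hx (n+1)
        rw [hRsS n] at h1
        exact h1
      have htR : Tendsto (fun n => valJ Pr δ f (Rs n) x) atTop
          (𝓝 (valJ Pr δ f (⋂ n, Rs n) x)) := by
        have h2 := (ENNReal.tendsto_toReal (JE_ne_top Pr hδ_mem hf_nonneg hf_bdd
          (⋂ n, Rs n) x)).comp (hlim x)
        have h3 : (fun n => valJ Pr δ f (Rs n) x)
            = fun n => (TIE.JE δ f Pr (Rs n) x).toReal :=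
          funext fun n => valJ_eq hδ_mem hf_meas hf_nonneg (hmeasRs n) x
        rw [h3, valJ_eq hδ_mem hf_meas hf_nonneg hR₁meas x]
        exact h2
      exact le_of_tendsto htR (Eventually.of_forall hxn)
  · -- value domination
    intro x
    have h1 : valJ Pr δ f S x ≤ valJ Pr δ f (⋂ n, Rs n) x :=
      hvalJ_mono hSmeas hR₁meas hJSfin x
    have h2 : valJ Pr δ f T x ≤ valJ Pr δ f (⋂ n, Rs n) x :=
      hvalJ_mono hTmeas hR₁meas hJTfin x
    exact max_le (max_le (le_max_left _ _) (le_trans h1 (le_max_right _ _)))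
      (max_le (le_max_left _ _) (le_trans h2 (le_max_right _ _)))

end
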